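/- arXiv:2209.08079 — 3 statements merged into one kernel-verified Lean document; each statement's English description precedes it below -/
import Mathlib

section
/- Let G be a connected digraph, u a vertex with out-neighbors x_1,...,x_d, and v a vertex distinct from u with no edge from u to v. Then P(L(u,v)) = (1/d) * sum over i of (P(L(x_i,v)) + P(L(x_i; v, u))), where L(x_i; v, u) is the event that a random cover tour from x_i ends at u with v the next-to-last vertex to be first-visited. -/
open scoped ENNReal BigOperators

/-- A nonempty list of vertices is a walk if consecutive vertices are joined by edges. -/
def IsWalk {V : Type*} (E : V → V → Prop) : List V → Prop
  | [] => False
  | [_] => True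
  | a :: b :: t => E a b ∧ IsWalk E (b :: t)

/-- A digraph is connected if there is a directed walk between any two vertices. -/
def Conn {V : Type*} (E : V → V → Prop) : Prop :=
  ∀ a b : V, ∃ l : List V, IsWalk E l ∧ l.head? = some a ∧ l.getLast? = some b

/-- The out-neighbourhood of a vertex. -/
def outNbrs {V : Type*} [Fintype V] (E : V → V → Prop) [DecidableRel E] (u : V) : Finset V :=
  Finset.univ.filter (fun x => E u x)

/-- The probability that a simple random walk (moving to a uniformly random out-neighbour
at each step) follows a given finite walk. -/
noncomputable def walkWt {V : Type*} [Fintype V] (E : V → V → Prop) [DecidableRel E] :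
    List V → ℝ≥0∞
  | [] => 1
  | [_] => 1
  | a :: b :: t => ((outNbrs E a).card : ℝ≥0∞)⁻¹ * walkWt E (b :: t)

/-- `l` is a cover tour from `u` ending at `v`: a walk starting at `u`, visiting every
vertex, ending at `v`, with `v` first visited at the final step. -/
def IsCoverTour {V : Type*} (E : V → V → Prop) (u v : V) (l : List V) : Prop :=
  IsWalk E l ∧ l.head? = some u ∧ l.getLast? = some v ∧ (∀ x : V, x ∈ l) ∧ v ∉ l.dropLast

/-- `P(L(u,v))`: the probability that a random cover tour from `u` ends at `v`,
i.e. that `v` is the last vertex to be first-visited by the random walk from `u`. -/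
noncomputable def coverProb {V : Type*} [Fintype V] (E : V → V → Prop) [DecidableRel E]
    (u v : V) : ℝ≥0∞ :=
  ∑' l : {l : List V // IsCoverTour E u v l}, walkWt E (l : List V)

/-- `l` is a cover tour from `w` ending at `u`, in which `v` is the next-to-last vertex
to be first-visited: some prefix of `l` ends at `v`, first-visits `v` at its last step,
and has already visited every vertex other than `u`. -/
def IsCoverTour2 {V : Type*} (E : V → V → Prop) (w v u : V) (l : List V) : Prop :=
  IsWalk E l ∧ l.head? = some w ∧ l.getLast? = some u ∧ (∀ x : V, x ∈ l) ∧ u ∉ l.dropLast ∧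
    ∃ p : List V, p <+: l ∧ p.getLast? = some v ∧ v ∉ p.dropLast ∧ ∀ x : V, x ≠ u → x ∈ p

/-- `P(L(w; v, u))`: the probability that a random cover tour from `w` ends at `u`
with `v` the next-to-last vertex to be first-visited. -/
noncomputable def coverProb2 {V : Type*} [Fintype V] (E : V → V → Prop) [DecidableRel E]
    (w v u : V) : ℝ≥0∞ :=
  ∑' l : {l : List V // IsCoverTour2 E w v u l}, walkWt E (l : List V)

set_option linter.unusedSectionVars false

section aux
variable {V : Type*} [Fintype V] (E : V → V → Prop) [DecidableRel E]

lemma isWalk_iff : ∀ l : List V, IsWalk E l ↔ l ≠ [] ∧ l.Chain' E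
  | [] => by simp [IsWalk]
  | [a] => by simp [IsWalk, List.Chain', List.isChain_singleton]
  | a :: b :: t => by
    rw [IsWalk, isWalk_iff (b :: t)]; unfold List.Chain'; rw [List.isChain_cons_cons]
    simp

lemma IsWalk.ne_nil {l : List V} (h : IsWalk E l) : l ≠ [] := ((isWalk_iff E l).1 h).1

lemma IsWalk.chain' {l : List V} (h : IsWalk E l) : l.Chain' E := ((isWalk_iff E l).1 h).2

lemma isWalk_of_chain' {l : List V} (h1 : l ≠ []) (h2 : l.Chain' E) : IsWalk E l :=
  (isWalk_iff E l).2 ⟨h1, h2⟩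

lemma IsWalk.prefix {l p : List V} (h : IsWalk E l) (hp : p <+: l) (hne : p ≠ []) :
    IsWalk E p := isWalk_of_chain' E hne ((h.chain' E).prefix hp)

lemma IsWalk.tail_of_cons {a : V} {t : List V} (h : IsWalk E (a :: t)) (ht : t ≠ []) :
    IsWalk E t := isWalk_of_chain' E ht ((h.chain' E).tail)

lemma isWalk_cons {a : V} {t : List V} (ht : t ≠ []) :
    IsWalk E (a :: t) ↔ (∀ y ∈ t.head?, E a y) ∧ IsWalk E t := by
  rw [isWalk_iff, isWalk_iff]; unfold List.Chain'; rw [List.isChain_cons]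
  simp [ht]

lemma walkWt_nil : walkWt E ([] : List V) = 1 := rfl

lemma walkWt_singleton (a : V) : walkWt E [a] = 1 := rfl

lemma walkWt_cons {a : V} {t : List V} (ht : t ≠ []) :
    walkWt E (a :: t) = ((outNbrs E a).card : ℝ≥0∞)⁻¹ * walkWt E t := by
  cases t with
  | nil => simp at ht
  | cons b s => rfl

lemma walkWt_ne_zero : ∀ l : List V, walkWt E l ≠ 0
  | [] => one_ne_zero
  | [_] => one_ne_zero
  | a :: b :: t => by
    rw [show walkWt E (a :: b :: t) = ((outNbrs E a).card : ℝ≥0∞)⁻¹ * walkWt E (b :: t) from rfl]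
    exact mul_ne_zero (by simp) (walkWt_ne_zero (b :: t))

lemma walkWt_append : ∀ (p q : List V), p.getLast? = q.head? →
    walkWt E (p ++ q.tail) = walkWt E p * walkWt E q
  | [], q, h => by
    cases q with
    | nil => simp [walkWt_nil]
    | cons b s => simp at h
  | [a], q, h => by
    cases q with
    | nil => simp at h
    | cons b s =>
      simp only [List.getLast?_singleton, List.head?_cons, Option.some.injEq] at h
      subst h
      rw [walkWt_singleton, one_mul]
      rfl
  | a :: b :: t, q, h => by
    have h' : (b :: t).getLast? = q.head? := by
      rwa [List.getLast?_cons_cons] at h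
    have : (a :: b :: t) ++ q.tail = a :: b :: (t ++ q.tail) := by simp
    rw [this, show walkWt E (a :: b :: (t ++ q.tail)) =
      ((outNbrs E a).card : ℝ≥0∞)⁻¹ * walkWt E (b :: (t ++ q.tail)) from rfl,
      show (b :: (t ++ q.tail) : List V) = (b :: t) ++ q.tail from rfl,
      walkWt_append (b :: t) q h',
      show walkWt E (a :: b :: t) = ((outNbrs E a).card : ℝ≥0∞)⁻¹ * walkWt E (b :: t) from rfl,
      mul_assoc]

end aux

set_option linter.unusedSectionVars false

section wsum
variable {V : Type*} [Fintype V] (E : V → V → Prop) [DecidableRel E]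

noncomputable def wsum (P : List V → Prop) : ℝ≥0∞ :=
  ∑' l : {l : List V // P l}, walkWt E (l : List V)

lemma wsum_eq_indicator (P : List V → Prop) :
    wsum E P = ∑' l : List V, Set.indicator {l | P l} (walkWt E) l :=
  tsum_subtype _ _

lemma wsum_congr {P Q : List V → Prop} (h : ∀ l, P l ↔ Q l) : wsum E P = wsum E Q := by
  have : P = Q := funext fun l => propext (h l)
  rw [this]

lemma wsum_mono {P Q : List V → Prop} (h : ∀ l, P l → Q l) : wsum E P ≤ wsum E Q := by
  rw [wsum_eq_indicator, wsum_eq_indicator]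
  refine Summable.tsum_le_tsum (fun l => ?_) ENNReal.summable ENNReal.summable
  exact Set.indicator_le_indicator_of_subset (fun l hl => h l hl) (fun _ => zero_le) l

lemma wsum_false {P : List V → Prop} (h : ∀ l, ¬ P l) : wsum E P = 0 := by
  rw [wsum_eq_indicator]
  convert tsum_zero with l
  simp [Set.indicator, h l]

lemma wsum_single (l0 : List V) : wsum E (fun l => l = l0) = walkWt E l0 := by
  classical
  rw [wsum_eq_indicator]
  rw [tsum_eq_single l0 (by intro b hb; simp [Set.indicator, hb])]
  simp [Set.indicator]

lemma wsum_split (P Q : List V → Prop) :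
    wsum E P = wsum E (fun l => P l ∧ Q l) + wsum E (fun l => P l ∧ ¬ Q l) := by
  classical
  rw [wsum_eq_indicator, wsum_eq_indicator, wsum_eq_indicator, ← ENNReal.tsum_add]
  congr 1
  funext l
  by_cases hq : Q l <;> by_cases hp : P l <;> simp [Set.indicator, hp, hq]

lemma wsum_fiber {W : Type*} [Fintype W] [DecidableEq W] (P : List V → Prop) (π : List V → W) :
    wsum E P = ∑ y : W, wsum E (fun l => P l ∧ π l = y) := by
  classical
  rw [wsum_eq_indicator]
  have key : ∀ l : List V, Set.indicator {l | P l} (walkWt E) l =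
      ∑ y : W, Set.indicator {l | P l ∧ π l = y} (walkWt E) l := by
    intro l
    by_cases hp : P l
    · rw [Finset.sum_eq_single (π l)]
      · simp [Set.indicator, hp]
      · intro b _ hb; simp [Set.indicator, hp, fun h : π l = b => hb h.symm]
        intro h; exact absurd h.symm hb
      · intro h; exact absurd (Finset.mem_univ _) h
    · simp [Set.indicator, hp]
  calc ∑' l : List V, Set.indicator {l | P l} (walkWt E) l
      = ∑' l : List V, ∑ y : W, Set.indicator {l | P l ∧ π l = y} (walkWt E) l := by
        congr 1; funext l; exact key l
    _ = ∑ y : W, ∑' l : List V, Set.indicator {l | P l ∧ π l = y} (walkWt E) l :=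
        Summable.tsum_finsetSum (fun _ _ => ENNReal.summable)
    _ = _ := by
        apply Finset.sum_congr rfl
        intro y _
        rw [wsum_eq_indicator]

lemma wsum_head (P : List V → Prop) (hP : ∀ l, P l → l ≠ []) :
    wsum E P = ∑ y : V, wsum E (fun l => P l ∧ l.head? = some y) := by
  classical
  rw [wsum_fiber E P (fun l => l.head?), Fintype.sum_option]
  have h0 : wsum E (fun l => P l ∧ l.head? = none) = 0 := by
    apply wsum_false
    rintro l ⟨hp, hh⟩
    exact hP l hp (List.head?_eq_none_iff.mp hh)
  rw [h0, zero_add]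

lemma wsum_cons (w : V) (P : List V → Prop) (hP : ∀ l, P l → ∃ t, t ≠ [] ∧ l = w :: t) :
    wsum E P = ((outNbrs E w).card : ℝ≥0∞)⁻¹ * wsum E (fun t => t ≠ [] ∧ P (w :: t)) := by
  classical
  rw [wsum_eq_indicator, wsum_eq_indicator, ← ENNReal.tsum_mul_left]
  rw [← Function.Injective.tsum_eq (g := fun t : List V => w :: t)
    (fun a b h => by injection h) ?_]
  · congr 1
    funext t
    by_cases ht : t = []
    · subst ht
      have : ¬ P [w] := by
        intro hp
        obtain ⟨t, ht, hteq⟩ := hP _ hp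
        simp at hteq
        simp_all
      simp [Set.indicator, this]
    · by_cases hp : P (w :: t)
      · simp only [Set.indicator, Set.mem_setOf_eq, hp, if_true, ht, not_false_iff, true_and]
        rw [walkWt_cons E ht]
        simp [hp, ht]
      · simp [Set.indicator, hp, ht]
  · intro l hl
    simp only [Function.mem_support, Set.indicator, Set.mem_setOf_eq] at hl
    by_cases hp : P l
    · obtain ⟨t, _, rfl⟩ := hP _ hp
      exact ⟨t, rfl⟩
    · simp [hp] at hl

lemma wsum_iSup_len (P : List V → Prop) :
    wsum E P = ⨆ n : ℕ, wsum E (fun l => P l ∧ l.length ≤ n) := by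
  classical
  apply le_antisymm
  · rw [wsum_eq_indicator, ENNReal.tsum_eq_iSup_sum]
    refine iSup_le fun s => ?_
    refine le_trans ?_ (le_iSup _ (s.sup List.length))
    rw [wsum_eq_indicator]
    refine le_trans (Finset.sum_le_sum fun l hl => ?_)
      (Summable.sum_le_tsum s (fun _ _ => zero_le) ENNReal.summable)
    by_cases hp : P l
    · simp [Set.indicator, hp, Finset.le_sup hl]
    · simp [Set.indicator, hp]
  · exact iSup_le fun n => wsum_mono E fun l h => h.1

end wsum

section hit
variable {V : Type*} [Fintype V] (E : V → V → Prop) [DecidableRel E] (u : V)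

open scoped Classical in
noncomputable def hitA : ℕ → V → ℝ≥0∞
  | 0, w => if w = u then 0 else 1
  | (n+1), w => if w = u then 0 else
      ((outNbrs E w).card : ℝ≥0∞)⁻¹ * ∑ y ∈ outNbrs E w, hitA n y

open scoped Classical in
noncomputable def hitH : ℕ → V → ℝ≥0∞
  | 0, w => if w = u then 1 else 0
  | (n+1), w => if w = u then 1 else
      ((outNbrs E w).card : ℝ≥0∞)⁻¹ * ∑ y ∈ outNbrs E w, hitH n y

variable {E} {u}
variable (hd : ∀ w : V, (outNbrs E w).Nonempty)
include hd

lemma deg_ne_zero (w : V) : ((outNbrs E w).card : ℝ≥0∞) ≠ 0 :=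
  Nat.cast_ne_zero.mpr (Finset.card_pos.mpr (hd w)).ne'

omit hd in
lemma deg_ne_top (w : V) : ((outNbrs E w).card : ℝ≥0∞) ≠ ⊤ := ENNReal.natCast_ne_top _

lemma avg_le_one {f : V → ℝ≥0∞} {w : V} (hf : ∀ y ∈ outNbrs E w, f y ≤ 1) :
    ((outNbrs E w).card : ℝ≥0∞)⁻¹ * ∑ y ∈ outNbrs E w, f y ≤ 1 := by
  have h1 : ∑ y ∈ outNbrs E w, f y ≤ (outNbrs E w).card • (1 : ℝ≥0∞) :=
    Finset.sum_le_card_nsmul _ _ _ hf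
  rw [nsmul_eq_mul, mul_one] at h1
  calc ((outNbrs E w).card : ℝ≥0∞)⁻¹ * ∑ y ∈ outNbrs E w, f y
      ≤ ((outNbrs E w).card : ℝ≥0∞)⁻¹ * (outNbrs E w).card := by
        exact mul_le_mul_right h1 _
    _ = 1 := ENNReal.inv_mul_cancel (deg_ne_zero hd w) (deg_ne_top w)

omit hd in
lemma hitA_u (n : ℕ) : hitA E u n u = 0 := by cases n <;> simp [hitA]

lemma hitA_le_one (n : ℕ) (w : V) : hitA E u n w ≤ 1 := by
  induction n generalizing w with
  | zero => by_cases h : w = u <;> simp [hitA, h]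
  | succ n ih =>
    by_cases h : w = u
    · simp [hitA, h]
    · rw [show hitA E u (n+1) w = ((outNbrs E w).card : ℝ≥0∞)⁻¹ *
        ∑ y ∈ outNbrs E w, hitA E u n y by simp [hitA, h]]
      exact avg_le_one hd (fun y _ => ih y)

lemma hitA_succ_le (n : ℕ) (w : V) : hitA E u (n+1) w ≤ hitA E u n w := by
  induction n generalizing w with
  | zero =>
    by_cases h : w = u
    · simp [hitA, h]
    · rw [show hitA E u 1 w = ((outNbrs E w).card : ℝ≥0∞)⁻¹ *
        ∑ y ∈ outNbrs E w, hitA E u 0 y by simp [hitA, h]]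
      simp only [hitA, h, if_false]
      exact avg_le_one hd (fun y _ => by by_cases hy : y = u <;> simp [hitA, hy])
  | succ n ih =>
    by_cases h : w = u
    · simp [hitA, h]
    · rw [show hitA E u (n+2) w = ((outNbrs E w).card : ℝ≥0∞)⁻¹ *
        ∑ y ∈ outNbrs E w, hitA E u (n+1) y by simp [hitA, h],
        show hitA E u (n+1) w = ((outNbrs E w).card : ℝ≥0∞)⁻¹ *
        ∑ y ∈ outNbrs E w, hitA E u n y by simp [hitA, h]]
      exact mul_le_mul_right (Finset.sum_le_sum fun y _ => ih y) _

lemma hitA_anti (w : V) : Antitone (fun n => hitA E u n w) :=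
  antitone_nat_of_succ_le (fun n => hitA_succ_le hd n w)

lemma hitA_supermul (m : ℕ) : ∀ (n : ℕ) (w : V),
    hitA E u (n + m) w ≤ ((Finset.univ : Finset V).sup (hitA E u m)) * hitA E u n w := by
  intro n
  induction n with
  | zero =>
    intro w
    by_cases h : w = u
    · subst h; simp [hitA_u]
    · rw [show hitA E u 0 w = 1 by simp [hitA, h], mul_one, zero_add]
      exact Finset.le_sup (Finset.mem_univ w)
  | succ n ih =>
    intro w
    by_cases h : w = u
    · subst h
      rw [show (n + 1 + m) = (n + m) + 1 by ring, hitA_u, hitA_u]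
      simp
    · rw [show (n + 1 + m) = (n + m) + 1 by ring,
        show hitA E u ((n+m)+1) w = ((outNbrs E w).card : ℝ≥0∞)⁻¹ *
          ∑ y ∈ outNbrs E w, hitA E u (n+m) y by simp [hitA, h],
        show hitA E u (n+1) w = ((outNbrs E w).card : ℝ≥0∞)⁻¹ *
          ∑ y ∈ outNbrs E w, hitA E u n y by simp [hitA, h]]
      calc ((outNbrs E w).card : ℝ≥0∞)⁻¹ * ∑ y ∈ outNbrs E w, hitA E u (n+m) y
          ≤ ((outNbrs E w).card : ℝ≥0∞)⁻¹ *
            ∑ y ∈ outNbrs E w, ((Finset.univ : Finset V).sup (hitA E u m)) * hitA E u n y :=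
            mul_le_mul_right (Finset.sum_le_sum fun y _ => ih y) _
        _ = ((Finset.univ : Finset V).sup (hitA E u m)) * (((outNbrs E w).card : ℝ≥0∞)⁻¹ *
            ∑ y ∈ outNbrs E w, hitA E u n y) := by
            rw [← Finset.mul_sum]; ring

lemma hitA_lt_one_of_walk : ∀ (l : List V), IsWalk E l → l.getLast? = some u →
    ∀ w, l.head? = some w → hitA E u (l.length - 1) w < 1 := by
  classical
  intro l
  induction l with
  | nil => intro h; exact absurd rfl (h.ne_nil E)
  | cons a t ih =>
    intro hw hlast w hhead
    simp only [List.head?_cons, Option.some.injEq] at hhead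
    subst hhead
    by_cases hau : a = u
    · subst hau; simp [hitA_u]
    cases t with
    | nil =>
      simp only [List.getLast?_singleton, Option.some.injEq] at hlast
      exact absurd hlast hau
    | cons b s =>
      have htne : (b :: s : List V) ≠ [] := by simp
      have hwalk' : IsWalk E (b :: s) := hw.tail_of_cons E htne
      have hE : E a b := hw.1
      have hlast' : (b :: s).getLast? = some u := by
        rwa [List.getLast?_cons_cons] at hlast
      have hb : hitA E u ((b :: s).length - 1) b < 1 := ih hwalk' hlast' b rfl
      -- now show hitA ((a::b::s).length - 1) a < 1
      have hlen : (a :: b :: s : List V).length - 1 = ((b :: s : List V).length - 1) + 1 := by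
        simp
      rw [hlen]
      set n := (b :: s : List V).length - 1 with hn
      have hbmem : b ∈ outNbrs E a := by simp [outNbrs, hE]
      rw [show hitA E u (n+1) a = ((outNbrs E a).card : ℝ≥0∞)⁻¹ *
        ∑ y ∈ outNbrs E a, hitA E u n y by simp [hitA, hau]]
      have hsum : ∑ y ∈ outNbrs E a, hitA E u n y <
          ((outNbrs E a).card : ℝ≥0∞) := by
        rw [← Finset.add_sum_erase _ _ hbmem]
        have h2 : ∑ y ∈ (outNbrs E a).erase b, hitA E u n y ≤
            ((outNbrs E a).erase b).card • (1 : ℝ≥0∞) :=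
          Finset.sum_le_card_nsmul _ _ _ (fun y _ => hitA_le_one hd n y)
        rw [nsmul_eq_mul, mul_one] at h2
        calc hitA E u n b + ∑ y ∈ (outNbrs E a).erase b, hitA E u n y
            ≤ hitA E u n b + ((outNbrs E a).erase b).card := add_le_add_right h2 _
          _ < 1 + ((outNbrs E a).erase b).card :=
              ENNReal.add_lt_add_right (ENNReal.natCast_ne_top _) hb
          _ = ((outNbrs E a).card : ℝ≥0∞) := by
              rw [Finset.card_erase_of_mem hbmem]
              have : 1 ≤ (outNbrs E a).card := Finset.card_pos.mpr ⟨b, hbmem⟩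
              rw [← Nat.cast_one, ← Nat.cast_add, Nat.add_sub_cancel' this]
      calc ((outNbrs E a).card : ℝ≥0∞)⁻¹ * ∑ y ∈ outNbrs E a, hitA E u n y
          < ((outNbrs E a).card : ℝ≥0∞)⁻¹ * ((outNbrs E a).card : ℝ≥0∞) := by
            exact (ENNReal.mul_lt_mul_iff_right (ENNReal.inv_ne_zero.mpr (deg_ne_top a))
              (ENNReal.inv_ne_top.mpr (deg_ne_zero hd a))).mpr hsum
        _ = 1 := ENNReal.inv_mul_cancel (deg_ne_zero hd a) (deg_ne_top a)

lemma hitA_tendsto_zero (hconn : Conn E) (w : V) :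
    ∀ ε : ℝ≥0∞, 0 < ε → ∃ n, hitA E u n w ≤ ε := by
  -- uniform N with sup < 1
  classical
  have hex : ∀ x : V, ∃ n, hitA E u n x < 1 := by
    intro x
    obtain ⟨l, hl, hh, hlast⟩ := hconn x u
    exact ⟨l.length - 1, hitA_lt_one_of_walk hd l hl hlast x hh⟩
  choose nf hnf using hex
  set N := (Finset.univ : Finset V).sup nf with hN
  have hallN : ∀ x : V, hitA E u N x < 1 := by
    intro x
    exact lt_of_le_of_lt (hitA_anti hd x (Finset.le_sup (Finset.mem_univ x))) (hnf x)
  set c := (Finset.univ : Finset V).sup (hitA E u N) with hc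
  have hc1 : c < 1 := by
    rw [hc, Finset.sup_lt_iff (by norm_num : (⊥ : ℝ≥0∞) < 1)]
    exact fun x _ => hallN x
  have hpow : ∀ k : ℕ, ∀ x, hitA E u (k * N) x ≤ c ^ k := by
    intro k
    induction k with
    | zero => intro x; simpa using hitA_le_one hd 0 x
    | succ k ih =>
      intro x
      have : hitA E u (k * N + N) x ≤ c * hitA E u (k * N) x := hitA_supermul hd N (k * N) x
      calc hitA E u ((k+1) * N) x = hitA E u (k * N + N) x := by ring_nf
        _ ≤ c * hitA E u (k * N) x := this
        _ ≤ c * c ^ k := mul_le_mul_right (ih x) _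
        _ = c ^ (k+1) := by ring
  intro ε hε
  have htend := ENNReal.tendsto_pow_atTop_nhds_zero_of_lt_one hc1
  rw [ENNReal.tendsto_atTop_zero] at htend
  obtain ⟨k, hk⟩ := htend ε hε
  exact ⟨k * N, le_trans (hpow k w) (hk k le_rfl)⟩

lemma hitH_add_hitA (n : ℕ) (w : V) : hitH E u n w + hitA E u n w = 1 := by
  induction n generalizing w with
  | zero => by_cases h : w = u <;> simp [hitH, hitA, h]
  | succ n ih =>
    by_cases h : w = u
    · simp [hitH, hitA, h]
    · rw [show hitH E u (n+1) w = ((outNbrs E w).card : ℝ≥0∞)⁻¹ *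
        ∑ y ∈ outNbrs E w, hitH E u n y by simp [hitH, h],
        show hitA E u (n+1) w = ((outNbrs E w).card : ℝ≥0∞)⁻¹ *
        ∑ y ∈ outNbrs E w, hitA E u n y by simp [hitA, h],
        ← mul_add, ← Finset.sum_add_distrib]
      have : ∑ y ∈ outNbrs E w, (hitH E u n y + hitA E u n y) =
          ((outNbrs E w).card : ℝ≥0∞) := by
        rw [Finset.sum_congr rfl (fun y _ => ih y)]
        simp [mul_one]
      rw [this, ENNReal.inv_mul_cancel (deg_ne_zero hd w) (deg_ne_top w)]

lemma hitH_le_one (n : ℕ) (w : V) : hitH E u n w ≤ 1 := by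
  rw [← hitH_add_hitA hd n w]; exact le_self_add

lemma one_le_iSup_hitH (hconn : Conn E) (w : V) : 1 ≤ ⨆ n, hitH E u n w := by
  set S := ⨆ n, hitH E u n w with hS
  have key : ∀ n, 1 ≤ S + hitA E u n w := by
    intro n
    rw [← hitH_add_hitA hd n w]
    exact add_le_add_left (le_iSup (fun n => hitH E u n w) n) _
  rcases eq_or_ne S ⊤ with hStop | hStop
  · rw [hStop]; exact le_top
  refine ENNReal.le_of_forall_pos_le_add ?_
  intro ε hε _
  obtain ⟨n, hn⟩ := hitA_tendsto_zero hd hconn w ε (ENNReal.coe_pos.mpr hε)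
  exact le_trans (key n) (add_le_add_right hn _)

end hit

section listaux
variable {α : Type*}

lemma getLast?_cons_ne_nil {a : α} {t : List α} (ht : t ≠ []) :
    (a :: t).getLast? = t.getLast? := by
  rw [show a :: t = [a] ++ t from rfl, List.getLast?_append_of_ne_nil _ ht]

lemma dropLast_cons_ne_nil {a : α} {t : List α} (ht : t ≠ []) :
    (a :: t).dropLast = a :: t.dropLast := by
  cases t with
  | nil => simp at ht
  | cons b s => rfl

lemma dropLast_append_ne_nil {l r : List α} (hr : r ≠ []) :
    (l ++ r).dropLast = l ++ r.dropLast := by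
  simp [List.dropLast_append, hr]

lemma mem_of_getLast?_eq {l : List α} {a : α} (h : l.getLast? = some a) : a ∈ l := by
  obtain ⟨h', rfl⟩ := List.mem_getLast?_eq_getLast h
  exact List.getLast_mem h'

lemma ne_nil_of_getLast?_eq {l : List α} {a : α} (h : l.getLast? = some a) : l ≠ [] := by
  intro hl; subst hl; simp at h

lemma eq_cons_head_tail {l : List α} {a : α} (h : l.head? = some a) : l = a :: l.tail := by
  cases l with
  | nil => simp at h
  | cons b t => simp at h; subst h; rfl

end listaux

def Qhit {V : Type*} (E : V → V → Prop) (u w : V) (q : List V) : Prop :=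
  IsWalk E q ∧ q.head? = some w ∧ q.getLast? = some u ∧ u ∉ q.dropLast

lemma isWalk_singleton {V : Type*} (E : V → V → Prop) (a : V) : IsWalk E [a] := trivial

lemma Qhit_u_iff {V : Type*} (E : V → V → Prop) (u : V) (q : List V) :
    Qhit E u u q ↔ q = [u] := by
  constructor
  · rintro ⟨hw, hh, hl, hdrop⟩
    have hq : q = u :: q.tail := eq_cons_head_tail hh
    by_cases ht : q.tail = []
    · rw [hq, ht]
    · exfalso
      apply hdrop
      rw [hq, dropLast_cons_ne_nil ht]
      exact List.mem_cons_self
  · rintro rfl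
    exact ⟨isWalk_singleton E u, rfl, rfl, by simp⟩

section hitconn
variable {V : Type*} [Fintype V] (E : V → V → Prop) [DecidableRel E] (u : V)

lemma hitH_u (n : ℕ) : hitH E u n u = 1 := by cases n <;> simp [hitH]

variable {E u}
variable (hd : ∀ w : V, (outNbrs E w).Nonempty)
include hd

lemma hitH_eq : ∀ (n : ℕ) (w : V),
    wsum E (fun q => Qhit E u w q ∧ q.length ≤ n + 1) = hitH E u n w := by
  intro n
  induction n with
  | zero =>
    intro w
    by_cases hwu : w = u
    · subst hwu
      rw [hitH_u]
      rw [wsum_congr E (Q := fun q => q = [w]) (fun q => ?_)]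
      · rw [wsum_single]; rfl
      · constructor
        · rintro ⟨hq, _⟩; exact (Qhit_u_iff E w q).1 hq
        · rintro rfl; exact ⟨(Qhit_u_iff E w [w]).2 rfl, by simp⟩
    · rw [show hitH E u 0 w = 0 by simp [hitH, hwu]]
      apply wsum_false
      rintro q ⟨⟨hw, hh, hl, _⟩, hlen⟩
      have hq : q = w :: q.tail := eq_cons_head_tail hh
      rw [hq] at hlen
      simp only [List.length_cons] at hlen
      have htail : q.tail = [] := List.length_eq_zero_iff.mp (by omega)
      rw [hq, htail] at hl
      simp at hl
      exact hwu hl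
  | succ n ih =>
    intro w
    by_cases hwu : w = u
    · subst hwu
      rw [hitH_u]
      rw [wsum_congr E (Q := fun q => q = [w]) (fun q => ?_)]
      · rw [wsum_single]; rfl
      · constructor
        · rintro ⟨hq, _⟩; exact (Qhit_u_iff E w q).1 hq
        · rintro rfl; exact ⟨(Qhit_u_iff E w [w]).2 rfl, by simp⟩
    · rw [show hitH E u (n+1) w = ((outNbrs E w).card : ℝ≥0∞)⁻¹ *
        ∑ y ∈ outNbrs E w, hitH E u n y by simp [hitH, hwu]]
      rw [wsum_cons E w _ (fun q hq => ?_)]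
      swap
      · -- q = w :: t with t ≠ []
        obtain ⟨⟨hwalk, hh, hl, hdrop⟩, hlen⟩ := hq
        refine ⟨q.tail, ?_, eq_cons_head_tail hh⟩
        intro ht
        rw [eq_cons_head_tail hh, ht] at hl
        simp at hl
        exact hwu hl
      congr 1
      rw [wsum_head E _ (fun t ht => ht.1)]
      have step : ∀ y : V,
          wsum E (fun t => (t ≠ [] ∧ (Qhit E u w (w :: t) ∧ (w :: t).length ≤ n + 1 + 1)) ∧
            t.head? = some y) = if E w y then hitH E u n y else 0 := by
        intro y
        by_cases hEwy : E w y
        · rw [if_pos hEwy, ← ih y]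
          apply wsum_congr
          intro t
          constructor
          · rintro ⟨⟨htne, ⟨⟨hwalk, _, hlast, hdrop⟩, hlen⟩⟩, hhead⟩
            refine ⟨⟨hwalk.tail_of_cons E htne, hhead, ?_, ?_⟩, ?_⟩
            · rwa [getLast?_cons_ne_nil htne] at hlast
            · intro hm; apply hdrop
              rw [dropLast_cons_ne_nil htne]
              exact List.mem_cons_of_mem _ hm
            · simp only [List.length_cons] at hlen
              omega
          · rintro ⟨⟨hwalk, hhead, hlast, hdrop⟩, hlen⟩
            have htne : t ≠ [] := hwalk.ne_nil E
            refine ⟨⟨htne, ⟨⟨?_, rfl, ?_, ?_⟩, ?_⟩⟩, hhead⟩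
            · rw [isWalk_cons E htne]
              refine ⟨fun z hz => ?_, hwalk⟩
              rw [hhead] at hz; simp at hz; subst hz; exact hEwy
            · rwa [getLast?_cons_ne_nil htne]
            · rw [dropLast_cons_ne_nil htne]
              intro hm
              rcases List.mem_cons.mp hm with h | h
              · exact hwu h.symm
              · exact hdrop h
            · simp only [List.length_cons]
              omega
        · rw [if_neg hEwy]
          apply wsum_false
          rintro t ⟨⟨htne, ⟨⟨hwalk, _, _, _⟩, _⟩⟩, hhead⟩
          apply hEwy
          rw [isWalk_cons E htne] at hwalk
          exact hwalk.1 y hhead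
      refine (Finset.sum_congr rfl fun y _ => ((wsum_congr E fun l => Iff.rfl).trans (step y))).trans ?_
      rw [show outNbrs E w = Finset.univ.filter (fun y => E w y) from rfl, Finset.sum_filter]

lemma hit_one (hconn : Conn E) (w : V) : wsum E (Qhit E u w) = 1 := by
  rw [wsum_iSup_len]
  apply le_antisymm
  · refine iSup_le fun n => ?_
    refine le_trans (wsum_mono E (P := fun l => Qhit E u w l ∧ l.length ≤ n)
      (Q := fun l => Qhit E u w l ∧ l.length ≤ n + 1)
      (fun l h => ⟨h.1, h.2.trans (Nat.le_succ n)⟩)) ?_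
    rw [hitH_eq hd n w]
    exact hitH_le_one hd n w
  · refine le_trans (one_le_iSup_hitH (u := u) hd hconn w) (iSup_le fun n => ?_)
    rw [← hitH_eq hd n w]
    exact le_iSup_of_le (n+1) (le_of_eq (wsum_congr E fun l => Iff.rfl))

end hitconn

section decomp

lemma prefix_unique {α : Type*} {v : α} {l p₁ p₂ : List α} (h₁ : p₁ <+: l) (h₂ : p₂ <+: l)
    (hl₁ : p₁.getLast? = some v) (hl₂ : p₂.getLast? = some v)
    (hd₁ : v ∉ p₁.dropLast) (hd₂ : v ∉ p₂.dropLast) : p₁ = p₂ := by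
  have aux : ∀ {q₁ q₂ : List α}, q₁ <+: q₂ → q₁.getLast? = some v →
      v ∉ q₂.dropLast → q₁ = q₂ := by
    rintro q₁ q₂ ⟨r, rfl⟩ hlast hdrop
    cases r with
    | nil => simp
    | cons a s =>
      exfalso
      apply hdrop
      rw [dropLast_append_ne_nil (by simp)]
      exact List.mem_append_left _ (mem_of_getLast?_eq hlast)
  rcases List.prefix_or_prefix_of_prefix h₁ h₂ with h | h
  · exact aux h hl₁ hd₂
  · exact (aux h hl₂ hd₁).symm

lemma head?_append_left {α : Type*} {p r : List α} (hp : p ≠ []) :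
    (p ++ r).head? = p.head? := by
  cases p with
  | nil => simp at hp
  | cons a t => rfl

variable {V : Type*} [Fintype V] (E : V → V → Prop) [DecidableRel E]

lemma isWalk_append_right {p r : List V} {m : V} (h : IsWalk E (p ++ r))
    (hm : p.getLast? = some m) : IsWalk E (m :: r) := by
  have hcp := h.chain' E
  rw [List.Chain', List.isChain_append] at hcp
  obtain ⟨h1, h2, h3⟩ := hcp
  apply isWalk_of_chain' E (by simp)
  rw [List.Chain', List.isChain_cons]
  exact ⟨fun y hy => h3 m hm y hy, h2⟩

lemma isWalk_append {p q : List V} (hp : IsWalk E p) (hq : IsWalk E q)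
    (h : p.getLast? = q.head?) : IsWalk E (p ++ q.tail) := by
  apply isWalk_of_chain' E (by simp [hp.ne_nil E])
  rw [List.Chain', List.isChain_append]
  refine ⟨hp.chain' E, (hq.chain' E).tail, ?_⟩
  intro a ha y hy
  rw [h] at ha
  have hq2 : q = a :: q.tail := eq_cons_head_tail ha
  have hc := hq.chain' E
  rw [hq2, List.Chain', List.isChain_cons] at hc
  exact hc.1 y hy

def Bpred {V : Type*} (E : V → V → Prop) (x v u : V) (p : List V) : Prop :=
  IsWalk E p ∧ p.head? = some x ∧ p.getLast? = some v ∧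
    (∀ y : V, y ≠ u → y ∈ p) ∧ v ∉ p.dropLast ∧ u ∉ p

lemma cover2_decomp_ex {x v u : V} (hvu : v ≠ u) {l : List V} (hl : IsCoverTour2 E x v u l) :
    ∃ p q : List V, Bpred E x v u p ∧ Qhit E u v q ∧ p ++ q.tail = l := by
  obtain ⟨hw, hh, hlast, hcov, hdrop, p, hp, hplast, hpdrop, hpcov⟩ := hl
  have hpne : p ≠ [] := ne_nil_of_getLast?_eq hplast
  obtain ⟨r, hr⟩ := hp
  have hrne : r ≠ [] := by
    rintro rfl
    rw [List.append_nil] at hr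
    subst hr
    rw [hplast] at hlast
    exact hvu (by injection hlast)
  have hdl : l.dropLast = p ++ r.dropLast := by
    rw [← hr, dropLast_append_ne_nil hrne]
  have hup : u ∉ p := fun hm => hdrop (hdl ▸ List.mem_append_left _ hm)
  have hurd : u ∉ r.dropLast := fun hm => hdrop (hdl ▸ List.mem_append_right _ hm)
  have hwpr : IsWalk E (p ++ r) := hr ▸ hw
  refine ⟨p, v :: r, ⟨hw.prefix E ⟨r, hr⟩ hpne, ?_, hplast, hpcov, hpdrop, hup⟩,
    ⟨isWalk_append_right E hwpr hplast, rfl, ?_, ?_⟩, ?_⟩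
  · rw [← hr, head?_append_left hpne] at hh
    exact hh
  · rw [getLast?_cons_ne_nil hrne, ← List.getLast?_append_of_ne_nil p hrne, hr]
    exact hlast
  · rw [dropLast_cons_ne_nil hrne]
    intro hm
    rcases List.mem_cons.mp hm with h | h
    · exact hvu h.symm
    · exact hurd h
  · simpa using hr

lemma cover2_recomp {x v u : V} (hvu : v ≠ u) {p q : List V}
    (hB : Bpred E x v u p) (hQ : Qhit E u v q) : IsCoverTour2 E x v u (p ++ q.tail) := by
  obtain ⟨hpw, hph, hpl, hpcov, hpdrop, hpu⟩ := hB
  obtain ⟨hqw, hqh, hql, hqdrop⟩ := hQ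
  have hpne : p ≠ [] := hpw.ne_nil E
  have hq2 : q = v :: q.tail := eq_cons_head_tail hqh
  have hrne : q.tail ≠ [] := by
    intro ht
    rw [hq2, ht] at hql
    exact hvu (by injection hql)
  have hql' : q.tail.getLast? = some u := by
    rw [hq2, getLast?_cons_ne_nil hrne] at hql
    exact hql
  have hqdrop' : u ∉ q.tail.dropLast := by
    intro hm
    apply hqdrop
    rw [hq2, dropLast_cons_ne_nil hrne]
    exact List.mem_cons_of_mem _ hm
  refine ⟨isWalk_append E hpw hqw (hpl.trans hqh.symm), ?_, ?_, ?_, ?_, p, ⟨q.tail, rfl⟩,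
    hpl, hpdrop, hpcov⟩
  · rw [head?_append_left hpne]; exact hph
  · rw [List.getLast?_append_of_ne_nil p hrne]; exact hql'
  · intro y
    by_cases hy : y = u
    · subst hy
      have hyq : y ∈ q := mem_of_getLast?_eq hql
      rw [hq2] at hyq
      rcases List.mem_cons.mp hyq with h | h
      · exact absurd h.symm hvu
      · exact List.mem_append_right _ h
    · exact List.mem_append_left _ (hpcov y hy)
  · rw [dropLast_append_ne_nil hrne]
    intro hm
    rcases List.mem_append.mp hm with h | h
    · exact hpu h
    · exact hqdrop' h

end decomp

section prod
variable {V : Type*} [Fintype V] (E : V → V → Prop) [DecidableRel E]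

lemma coverProb2_eq_mul (x v u : V) (hvu : v ≠ u) :
    coverProb2 E x v u = wsum E (Bpred E x v u) * wsum E (Qhit E u v) := by
  classical
  rw [show coverProb2 E x v u = wsum E (IsCoverTour2 E x v u) from rfl]
  rw [wsum_eq_indicator, wsum_eq_indicator, wsum_eq_indicator]
  set Ic := Set.indicator {l : List V | IsCoverTour2 E x v u l} (walkWt E) with hIc
  set Ib := Set.indicator {l : List V | Bpred E x v u l} (walkWt E) with hIb
  set Iq := Set.indicator {l : List V | Qhit E u v l} (walkWt E) with hIq
  have hrhs : (∑' p : List V, Ib p) * (∑' q : List V, Iq q) =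
      ∑' pq : List V × List V, Ib pq.1 * Iq pq.2 := by
    rw [ENNReal.tsum_prod']
    rw [← ENNReal.tsum_mul_right]
    congr 1
    funext p
    exact (ENNReal.tsum_mul_left (a := Ib p) (f := Iq)).symm
  rw [hrhs]
  set g : List V × List V → ℝ≥0∞ := fun pq => Ib pq.1 * Iq pq.2 with hg
  have hsupp : ∀ pq : List V × List V, g pq ≠ 0 →
      Bpred E x v u pq.1 ∧ Qhit E u v pq.2 := by
    intro pq h
    by_contra hc
    apply h
    rw [not_and_or] at hc
    rcases hc with hB | hQ
    · show Ib pq.1 * Iq pq.2 = 0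
      rw [hIb, Set.indicator_of_notMem (s := {l : List V | Bpred E x v u l}) hB, zero_mul]
    · show Ib pq.1 * Iq pq.2 = 0
      rw [hIq, Set.indicator_of_notMem (s := {l : List V | Qhit E u v l}) hQ, mul_zero]
  refine tsum_eq_tsum_of_ne_zero_bij (fun pq => pq.1.1 ++ pq.1.2.tail) ?_ ?_ ?_
  · rintro ⟨⟨p₁, q₁⟩, h₁⟩ ⟨⟨p₂, q₂⟩, h₂⟩ heq
    obtain ⟨hB₁, hQ₁⟩ := hsupp _ h₁
    obtain ⟨hB₂, hQ₂⟩ := hsupp _ h₂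
    simp only at heq
    have hp : p₁ = p₂ := by
      refine prefix_unique (l := p₁ ++ q₁.tail) ⟨q₁.tail, rfl⟩ ⟨q₂.tail, heq.symm⟩
        hB₁.2.2.1 hB₂.2.2.1 hB₁.2.2.2.2.1 hB₂.2.2.2.2.1
    subst hp
    have hq : q₁.tail = q₂.tail := List.append_cancel_left heq
    have hh₁ : q₁.head? = some v := hQ₁.2.1
    have hh₂ : q₂.head? = some v := hQ₂.2.1
    have hq1 : q₁ = q₂ := by
      rw [eq_cons_head_tail hh₁, eq_cons_head_tail hh₂, hq]
    simp [hq1]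
  · intro l hl
    have hcov : IsCoverTour2 E x v u l := by
      by_contra hc
      exact hl (Set.indicator_of_notMem (s := {l : List V | IsCoverTour2 E x v u l}) hc _)
    obtain ⟨p, q, hB, hQ, hpq⟩ := cover2_decomp_ex E hvu hcov
    refine ⟨⟨(p, q), ?_⟩, hpq⟩
    exact mul_ne_zero
      (by rw [hIb, Set.indicator_of_mem (s := {l : List V | Bpred E x v u l}) hB]; exact walkWt_ne_zero E p)
      (by rw [hIq, Set.indicator_of_mem (s := {l : List V | Qhit E u v l}) hQ]; exact walkWt_ne_zero E q)
  · rintro ⟨⟨p, q⟩, h⟩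
    obtain ⟨hB, hQ⟩ := hsupp _ h
    have hcov : IsCoverTour2 E x v u (p ++ q.tail) := cover2_recomp E hvu hB hQ
    show Ic (p ++ q.tail) = Ib p * Iq q
    rw [hIc, Set.indicator_of_mem (s := {l : List V | IsCoverTour2 E x v u l}) hcov, hIb, hIq,
      Set.indicator_of_mem (s := {l : List V | Bpred E x v u l}) hB,
      Set.indicator_of_mem (s := {l : List V | Qhit E u v l}) hQ]
    exact walkWt_append E p q (hB.2.2.1.trans hQ.2.1.symm)

end prod

/-- Equation (1): `P(L(u,v)) = (1/d) ∑ᵢ (P(L(xᵢ,v)) + P(L(xᵢ; v, u)))`, summing over the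
out-neighbours `xᵢ` of `u`, where `d` is the out-degree of `u`. -/
theorem stmt2 {V : Type*} [Fintype V] (E : V → V → Prop) [DecidableRel E]
    (hconn : Conn E) (u v : V) (hne : v ≠ u) (huv : ¬ E u v) :
    coverProb E u v =
      ((outNbrs E u).card : ℝ≥0∞)⁻¹ *
        ∑ x ∈ outNbrs E u, (coverProb E x v + coverProb2 E x v u) := by

  classical
  have hd : ∀ w : V, (outNbrs E w).Nonempty := by
    intro w
    have hb : ∃ b : V, b ≠ w := by
      by_cases hw : w = u
      · exact ⟨v, hw ▸ hne⟩
      · exact ⟨u, fun h => hw h.symm⟩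
    obtain ⟨b, hb⟩ := hb
    obtain ⟨l, hl, hh, hlast⟩ := hconn w b
    have hlq : l = w :: l.tail := eq_cons_head_tail hh
    have ht : l.tail ≠ [] := by
      intro h
      rw [hlq, h] at hlast
      simp at hlast
      exact hb hlast.symm
    obtain ⟨c, hc⟩ : ∃ c, l.tail.head? = some c := by
      cases htl : l.tail with
      | nil => exact absurd htl ht
      | cons c s => exact ⟨c, rfl⟩
    have hw2 : IsWalk E l := hl
    rw [hlq, isWalk_cons E ht] at hw2
    have hE : E w c := hw2.1 c hc
    exact ⟨c, by simp [outNbrs, hE]⟩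
  rw [show coverProb E u v = wsum E (IsCoverTour E u v) from rfl]
  rw [wsum_cons E u _ (fun l hl => ?_)]
  swap
  · obtain ⟨hw, hh, hlast, hcov, hdrop⟩ := hl
    refine ⟨l.tail, ?_, eq_cons_head_tail hh⟩
    intro h
    rw [eq_cons_head_tail hh, h] at hlast
    simp at hlast
    exact hne hlast.symm
  congr 1
  rw [wsum_head E _ (fun t ht => ht.1)]
  rw [← Finset.sum_subset (Finset.subset_univ (outNbrs E u)) (fun y _ hy => ?_)]
  swap
  · apply wsum_false
    rintro t ⟨⟨htne, ⟨hw, _, _, _, _⟩⟩, hhead⟩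
    rw [isWalk_cons E htne] at hw
    apply hy
    have hE : E u y := hw.1 y hhead
    simp [outNbrs, hE]
  apply Finset.sum_congr rfl
  intro x hx
  have hEux : E u x := by simpa [outNbrs] using hx
  rw [wsum_split E _ (fun t => u ∈ t)]
  congr 1
  · rw [show coverProb E x v = wsum E (IsCoverTour E x v) from rfl]
    apply wsum_congr
    intro t
    constructor
    · rintro ⟨⟨⟨htne, ⟨hw, _, hlast, hcov, hdrop⟩⟩, hhead⟩, hu⟩
      refine ⟨hw.tail_of_cons E htne, hhead, ?_, ?_, ?_⟩
      · rwa [getLast?_cons_ne_nil htne] at hlast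
      · intro y
        rcases List.mem_cons.mp (hcov y) with h | h
        · subst h; exact hu
        · exact h
      · intro hm
        apply hdrop
        rw [dropLast_cons_ne_nil htne]
        exact List.mem_cons_of_mem _ hm
    · rintro ⟨hw, hhead, hlast, hcov, hdrop⟩
      have htne : t ≠ [] := hw.ne_nil E
      refine ⟨⟨⟨htne, ⟨?_, rfl, ?_, ?_, ?_⟩⟩, hhead⟩, hcov u⟩
      · rw [isWalk_cons E htne]
        refine ⟨fun z hz => ?_, hw⟩
        rw [hhead] at hz; simp at hz; subst hz; exact hEux
      · rwa [getLast?_cons_ne_nil htne]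
      · intro y; exact List.mem_cons_of_mem _ (hcov y)
      · rw [dropLast_cons_ne_nil htne]
        intro hm
        rcases List.mem_cons.mp hm with h | h
        · exact hne h
        · exact hdrop h
  · rw [coverProb2_eq_mul E x v u hne, hit_one hd hconn v, mul_one]
    apply wsum_congr
    intro t
    constructor
    · rintro ⟨⟨⟨htne, ⟨hw, _, hlast, hcov, hdrop⟩⟩, hhead⟩, hu⟩
      refine ⟨hw.tail_of_cons E htne, hhead, ?_, ?_, ?_, hu⟩
      · rwa [getLast?_cons_ne_nil htne] at hlast
      · intro y hy
        rcases List.mem_cons.mp (hcov y) with h | h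
        · exact absurd h hy
        · exact h
      · intro hm
        apply hdrop
        rw [dropLast_cons_ne_nil htne]
        exact List.mem_cons_of_mem _ hm
    · rintro ⟨hw, hhead, hlast, hcov, hdrop, hu⟩
      have htne : t ≠ [] := hw.ne_nil E
      refine ⟨⟨⟨htne, ⟨?_, rfl, ?_, ?_, ?_⟩⟩, hhead⟩, hu⟩
      · rw [isWalk_cons E htne]
        refine ⟨fun z hz => ?_, hw⟩
        rw [hhead] at hz; simp at hz; subst hz; exact hEux
      · rwa [getLast?_cons_ne_nil htne]
      · intro y
        by_cases hy : y = u
        · subst hy; exact List.mem_cons_self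
        · exact List.mem_cons_of_mem _ (hcov y hy)
      · rw [dropLast_cons_ne_nil htne]
        intro hm
        rcases List.mem_cons.mp hm with h | h
        · exact hne h
        · exact hdrop h
end

section
/- Let G be a digraph with at least 3 vertices such that for every vertex u and all distinct vertices v, w different from u, the probability that a random cover tour from u ends at v equals the probability that it ends at w. Then every edge of G is bidirected: if (v,u) is an edge, then (u,v) is an edge. -/
open scoped ENNReal BigOperators

namespace CoverProof
set_option linter.unusedSectionVars false

variable {V : Type*} [Fintype V] (E : V → V → Prop) [DecidableRel E]

noncomputable def deg (u : V) : ℝ≥0∞ := ((outNbrs E u).card : ℝ≥0∞)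

lemma isWalk_iff : ∀ (l : List V), IsWalk E l ↔ l ≠ [] ∧ l.IsChain E
  | [] => by simp [IsWalk]
  | [a] => by simp [IsWalk]
  | a :: b :: t => by
      rw [IsWalk, isWalk_iff (b :: t)]
      simp [List.isChain_cons_cons, and_assoc]

lemma walkWt_cons (a : V) (l : List V) (hl : l ≠ []) :
    walkWt E (a :: l) = (deg E a)⁻¹ * walkWt E l := by
  cases l with
  | nil => exact absurd rfl hl
  | cons b t => rfl

lemma deg_ne_zero (hout : ∀ u : V, (outNbrs E u).Nonempty) (u : V) : deg E u ≠ 0 := by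
  have := (hout u).card_pos
  simp only [deg, ne_eq, Nat.cast_eq_zero]
  omega

lemma deg_ne_top (u : V) : deg E u ≠ ⊤ := by simp [deg]

lemma one_le_deg (hout : ∀ u : V, (outNbrs E u).Nonempty) (u : V) : 1 ≤ deg E u := by
  have := (hout u).card_pos
  unfold deg; exact_mod_cast this

lemma inv_deg_pos (u : V) : 0 < (deg E u)⁻¹ := by
  simp [ENNReal.inv_pos, deg_ne_top]

lemma walkWt_pos : ∀ (l : List V), 0 < walkWt E l
  | [] => by simp [walkWt]
  | [a] => by simp [walkWt]
  | a :: b :: t => by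
      rw [walkWt_cons E a (b :: t) (by simp)]
      exact ENNReal.mul_pos (inv_deg_pos E a).ne' (walkWt_pos (b :: t)).ne'

lemma walkWt_ne_top (hout : ∀ u : V, (outNbrs E u).Nonempty) :
    ∀ (l : List V), walkWt E l ≠ ⊤
  | [] => by simp [walkWt]
  | [a] => by simp [walkWt]
  | a :: b :: t => by
      rw [walkWt_cons E a (b :: t) (by simp)]
      exact ENNReal.mul_ne_top (by simp [ENNReal.inv_ne_top, deg_ne_zero E hout a])
        (walkWt_ne_top hout (b :: t))

lemma walkWt_le_one (hout : ∀ u : V, (outNbrs E u).Nonempty) :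
    ∀ (l : List V), walkWt E l ≤ 1
  | [] => le_refl _
  | [a] => le_refl _
  | a :: b :: t => by
      rw [walkWt_cons E a (b :: t) (by simp)]
      calc (deg E a)⁻¹ * walkWt E (b :: t) ≤ 1 * 1 := by
            refine mul_le_mul' ?_ (walkWt_le_one hout (b :: t))
            rw [ENNReal.inv_le_one]
            exact one_le_deg E hout a
          _ = 1 := one_mul 1

/-- multiplicativity of weights over joins -/
lemma walkWt_join : ∀ (p q : List V), p ≠ [] → q ≠ [] → p.getLast? = q.head? →
    walkWt E (p ++ q.tail) = walkWt E p * walkWt E q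
  | [], _, hp, _, _ => absurd rfl hp
  | [a], q, _, hq, h => by
      cases q with
      | nil => exact absurd rfl hq
      | cons b t =>
        simp at h; subst h
        simp [walkWt]
  | a :: b :: t, q, _, hq, h => by
      have h' : (b :: t).getLast? = q.head? := by
        rw [← h]; simp [List.getLast?_cons_cons]
      have := walkWt_join (b :: t) q (by simp) hq h'
      show walkWt E (a :: (b :: t ++ q.tail)) = _
      rw [walkWt_cons E a _ (by simp), this, walkWt_cons E a (b :: t) (by simp), mul_assoc]

end CoverProof
namespace CoverProof
set_option linter.unusedSectionVars false

variable {V : Type*} [Fintype V] (E : V → V → Prop) [DecidableRel E]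

/-- Basic join lemma for walks sharing an endpoint. -/
lemma join_spec {l₁ l₂ : List V} (h₁ : l₁ ≠ []) (h₂ : l₂ ≠ [])
    (hlink : l₁.getLast? = l₂.head?) (c₁ : l₁.IsChain E) (c₂ : l₂.IsChain E) :
    (l₁ ++ l₂.tail) ≠ [] ∧ (l₁ ++ l₂.tail).IsChain E ∧
    (l₁ ++ l₂.tail).head? = l₁.head? ∧ (l₁ ++ l₂.tail).getLast? = l₂.getLast? ∧
    (∀ a, a ∈ l₁ ++ l₂.tail ↔ a ∈ l₁ ∨ a ∈ l₂) := by
  cases l₂ with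
  | nil => exact absurd rfl h₂
  | cons b t =>
    have hb : l₁.getLast? = some b := by simpa using hlink
    refine ⟨by simp [h₁], ?_, ?_, ?_, ?_⟩
    · rw [List.isChain_append]
      refine ⟨c₁, c₂.tail, ?_⟩
      intro x hx y hy
      rw [hb] at hx; simp at hx; subst hx
      cases t with
      | nil => simp at hy
      | cons c t' =>
        simp at hy; subst hy
        exact (List.isChain_cons_cons.1 c₂).1
    · cases l₁ with
      | nil => exact absurd rfl h₁
      | cons a s => simp
    · cases t with
      | nil =>
        simp only [List.tail_cons, List.append_nil]
        rw [hb]; simp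
      | cons c t' =>
        simp only [List.tail_cons]
        rw [List.getLast?_append_of_ne_nil _ (by simp)]
        simp [List.getLast?_cons_cons]
    · intro a
      simp only [List.mem_append, List.tail_cons, List.mem_cons]
      constructor
      · rintro (h | h)
        · exact Or.inl h
        · exact Or.inr (Or.inr h)
      · rintro (h | h | h)
        · exact Or.inl h
        · left
          obtain ⟨hne, he⟩ := List.mem_getLast?_eq_getLast (l := l₁) (x := b)
            (by rw [hb]; rfl)
          rw [h, he]; exact List.getLast_mem hne
        · exact Or.inr h

/-- split a list at the first occurrence of `x`. -/
lemma split_first {x : V} : ∀ {l : List V}, x ∈ l → ∃ p q, l = p ++ x :: q ∧ x ∉ p := by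
  intro l
  induction l with
  | nil => intro h; simp at h
  | cons a t ih =>
    intro h
    by_cases hax : a = x
    · exact ⟨[], t, by simp [hax], by simp⟩
    · have hxt : x ∈ t := by
        rcases List.mem_cons.1 h with h' | h'
        · exact absurd h'.symm hax
        · exact h'
      obtain ⟨p, q, rfl, hnp⟩ := ih hxt
      exact ⟨a :: p, q, by simp, by simp [hnp, Ne.symm hax]⟩

/-- split a list at the last occurrence of `x`. -/
lemma split_last {x : V} : ∀ {l : List V}, x ∈ l → ∃ p q, l = p ++ x :: q ∧ x ∉ q := by
  intro l
  induction l with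
  | nil => intro h; simp at h
  | cons a t ih =>
    intro h
    by_cases hxt : x ∈ t
    · obtain ⟨p, q, rfl, hnq⟩ := ih hxt
      exact ⟨a :: p, q, by simp, hnq⟩
    · have : a = x := by
        rcases List.mem_cons.1 h with h' | h'
        · exact h'.symm
        · exact absurd h' hxt
      exact ⟨[], t, by simp [this], hxt⟩

/-- a directed walk from `a` to `b`, in chain form. -/
lemma conn_walk (hconn : Conn E) (a b : V) :
    ∃ l : List V, l ≠ [] ∧ l.IsChain E ∧ l.head? = some a ∧ l.getLast? = some b := by
  obtain ⟨l, hw, hh, hl⟩ := hconn a b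
  rw [isWalk_iff] at hw
  exact ⟨l, hw.1, hw.2, hh, hl⟩

/-- a walk from `a` visiting all targets in `ts`. -/
lemma cover_walk_aux (hconn : Conn E) : ∀ (ts : List V) (a : V),
    ∃ l : List V, l ≠ [] ∧ l.IsChain E ∧ l.head? = some a ∧ ∀ t ∈ ts, t ∈ l := by
  intro ts
  induction ts with
  | nil => exact fun a => ⟨[a], by simp, by simp, by simp, by simp⟩
  | cons t ts' ih =>
    intro a
    obtain ⟨l₁, h₁, c₁, hh₁, hl₁⟩ := conn_walk E hconn a t
    obtain ⟨l₂, h₂, c₂, hh₂, hcov₂⟩ := ih t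
    obtain ⟨hne, hc, hh, _, hmem⟩ := join_spec E h₁ h₂ (by rw [hl₁, hh₂]) c₁ c₂
    refine ⟨l₁ ++ l₂.tail, hne, hc, by rw [hh, hh₁], ?_⟩
    intro s hs
    rcases List.mem_cons.1 hs with rfl | hs'
    · exact (hmem s).2 (Or.inr (by
        have : s ∈ l₂.head? := by rw [hh₂]; simp
        exact List.mem_of_mem_head? this))
    · exact (hmem s).2 (Or.inr (hcov₂ s hs'))

/-- a covering walk from `a`. -/
lemma cover_walk (hconn : Conn E) (a : V) :
    ∃ l : List V, l ≠ [] ∧ l.IsChain E ∧ l.head? = some a ∧ ∀ x : V, x ∈ l := by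
  obtain ⟨l, h1, h2, h3, h4⟩ := cover_walk_aux E hconn Finset.univ.toList a
  exact ⟨l, h1, h2, h3, fun x => h4 x (by simp)⟩

/-- every covering walk has a cover-tour prefix. -/
lemma coverTour_prefix [Nonempty V] {u : V} : ∀ {l : List V}, l ≠ [] → l.IsChain E →
    l.head? = some u → (∀ x : V, x ∈ l) →
    ∃ p v, p <+: l ∧ IsCoverTour E u v p := by
  suffices H : ∀ (n : ℕ) (l : List V), l.length ≤ n → l ≠ [] → l.IsChain E →
      l.head? = some u → (∀ x : V, x ∈ l) → ∃ p v, p <+: l ∧ IsCoverTour E u v p by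
    intro l hne hc hh hcov
    exact H l.length l le_rfl hne hc hh hcov
  intro n
  induction n with
  | zero => intro l hl hne _ _ _; interval_cases h : l.length <;> simp_all
  | succ n ih =>
  intro l hlen hne hc hh hcov
  by_cases hall : ∀ x : V, x ∈ l.dropLast
  · have hne' : l.dropLast ≠ [] := by
      intro h
      obtain ⟨x⟩ := ‹Nonempty V›
      have := hall x; rw [h] at this; simp at this
    have hpre : l.dropLast <+: l := ⟨[l.getLast hne], List.dropLast_append_getLast hne⟩
    have hc' : l.dropLast.IsChain E := hc.prefix hpre
    have hh' : l.dropLast.head? = some u := by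
      cases l with
      | nil => exact absurd rfl hne
      | cons a t =>
        cases t with
        | nil => exact absurd rfl hne'
        | cons b t' => simpa using hh
    have hlen2 : l.dropLast.length < l.length := by
      rw [List.length_dropLast]
      cases l with
      | nil => exact absurd rfl hne
      | cons a t => simp
    obtain ⟨p, v, hp, hct⟩ := ih l.dropLast (by omega) hne' hc' hh' hall
    exact ⟨p, v, hp.trans hpre, hct⟩
  · push_neg at hall
    obtain ⟨w, hw⟩ := hall
    have hwl : w ∈ l := hcov w
    have hwlast : w = l.getLast hne := by
      have := List.dropLast_append_getLast hne
      rw [← this] at hwl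
      rcases List.mem_append.1 hwl with h | h
      · exact absurd h hw
      · simpa using h
    refine ⟨l, w, List.prefix_refl l, ?_⟩
    refine ⟨(isWalk_iff E l).2 ⟨hne, hc⟩, hh, ?_, hcov, by rw [hwlast] at hw ⊢; exact hw⟩
    rw [hwlast]
    exact (List.getLast?_eq_getLast hne).symm ▸ rfl

end CoverProof
namespace CoverProof
set_option linter.unusedSectionVars false

variable {V : Type*} [Fintype V] (E : V → V → Prop) [DecidableRel E]

/-- sum of walk weights over a set of lists -/
noncomputable def CP (P : Set (List V)) : ℝ≥0∞ :=
  ∑' l : List V, Set.indicator P (walkWt E) l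

lemma coverProb_eq_CP (u v : V) :
    coverProb E u v = CP E {l | IsCoverTour E u v l} :=
  tsum_subtype _ _

lemma le_CP {P : Set (List V)} {l : List V} (hl : l ∈ P) : walkWt E l ≤ CP E P := by
  have := ENNReal.le_tsum (f := Set.indicator P (walkWt E)) l
  rwa [Set.indicator_of_mem hl] at this

lemma CP_eq_zero_iff {P : Set (List V)} : CP E P = 0 ↔ P = ∅ := by
  constructor
  · intro h
    ext l
    simp only [Set.mem_empty_iff_false, iff_false]
    intro hl
    have := le_CP E hl
    rw [h, le_zero_iff] at this
    exact absurd this (walkWt_pos E l).ne'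
  · intro h
    simp [CP, h]

lemma CP_pos {P : Set (List V)} {l : List V} (hl : l ∈ P) : 0 < CP E P :=
  lt_of_lt_of_le (walkWt_pos E l) (le_CP E hl)

/-- helper list lemmas -/
lemma getLast?_cons_of_ne_nil (a : V) {m : List V} (hm : m ≠ []) :
    (a :: m).getLast? = m.getLast? := by
  cases m with
  | nil => exact absurd rfl hm
  | cons b t => simp [List.getLast?_cons_cons]

lemma dropLast_cons_of_ne_nil (a : V) {m : List V} (hm : m ≠ []) :
    (a :: m).dropLast = a :: m.dropLast := by
  cases m with
  | nil => exact absurd rfl hm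
  | cons b t => rfl

/-- tails of cover tours from `u` that contain `u` (so the tail itself is a cover tour) -/
def Tail1 (u v : V) : Set (List V) :=
  {m | ∃ x, m.head? = some x ∧ E u x ∧ IsCoverTour E x v m}

/-- tails of cover tours from `u` that avoid `u`: walks from an out-neighbour of `u`
avoiding `u`, covering everything else, and first-visiting `v` at the very end. -/
def Tail2 (u v : V) : Set (List V) :=
  {m | m ≠ [] ∧ m.IsChain E ∧ (∀ x ∈ m.head?, E u x) ∧ u ∉ m ∧
      (∀ w, w ≠ u → w ∈ m) ∧ m.getLast? = some v ∧ v ∉ m.dropLast}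

lemma tail_mem_iff (h2 : 2 ≤ Fintype.card V) (u v : V) (hvu : v ≠ u) (m : List V) :
    IsCoverTour E u v (u :: m) ↔ (m ∈ Tail1 E u v ∧ m ∉ Tail2 E u v) ∨
      (m ∈ Tail2 E u v ∧ m ∉ Tail1 E u v) := by
  have hunem : ∀ h : m ∈ Tail1 E u v, u ∈ m := by
    rintro ⟨x, hx, hex, hct⟩; exact hct.2.2.2.1 u
  have hdisj : ¬ (m ∈ Tail1 E u v ∧ m ∈ Tail2 E u v) := by
    rintro ⟨h1, h2'⟩; exact h2'.2.2.2.1 (hunem h1)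
  constructor
  · intro hct
    obtain ⟨hw, hh, hl, hcov, hnd⟩ := hct
    rw [isWalk_iff] at hw
    have hchain := hw.2
    obtain ⟨w, hw2⟩ : ∃ w : V, w ≠ u := by
      have h1 : 1 < Fintype.card V := by omega
      obtain ⟨w, hw'⟩ := Fintype.exists_ne_of_one_lt_card h1 u
      exact ⟨w, hw'⟩
    have hmne : m ≠ [] := by
      intro h; subst h
      have := hcov w
      simp at this
      exact hw2 this
    have hcm : m.IsChain E := (List.isChain_cons.1 hchain).2
    have heu : ∀ x ∈ m.head?, E u x := (List.isChain_cons.1 hchain).1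
    have hlm : m.getLast? = some v := by rwa [getLast?_cons_of_ne_nil u hmne] at hl
    have hcovm : ∀ w', w' ≠ u → w' ∈ m := by
      intro w' hw'
      have := hcov w'
      rcases List.mem_cons.1 this with h | h
      · exact absurd h hw'
      · exact h
    have hndm : v ∉ m.dropLast := by
      rw [dropLast_cons_of_ne_nil u hmne] at hnd
      intro h; exact hnd (List.mem_cons_of_mem _ h)
    by_cases hum : u ∈ m
    · left
      have hcovall : ∀ x : V, x ∈ m := by
        intro x
        by_cases hx : x = u
        · rw [hx]; exact hum
        · exact hcovm x hx
      have hmem1 : m ∈ Tail1 E u v :=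
        ⟨m.head hmne, List.head?_eq_head hmne, heu _ (List.head?_eq_head hmne),
          (isWalk_iff E m).2 ⟨hmne, hcm⟩, List.head?_eq_head hmne, hlm, hcovall, hndm⟩
      exact ⟨hmem1, fun h => hdisj ⟨hmem1, h⟩⟩
    · right
      refine ⟨⟨hmne, hcm, heu, hum, hcovm, hlm, hndm⟩, fun h => hdisj ⟨h, ?_⟩⟩
      exact ⟨hmne, hcm, heu, hum, hcovm, hlm, hndm⟩
  · rintro (⟨⟨x, hx, hex, hct⟩, -⟩ | ⟨⟨hmne, hcm, heu, hum, hcovm, hlm, hndm⟩, -⟩)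
    · obtain ⟨hwm, hhm, hlm, hcovm, hndm⟩ := hct
      rw [isWalk_iff] at hwm
      have hmne : m ≠ [] := hwm.1
      refine ⟨(isWalk_iff E _).2 ⟨by simp, List.isChain_cons.2 ⟨?_, hwm.2⟩⟩, by simp, ?_, ?_, ?_⟩
      · intro y hy; rw [hhm] at hy; simp at hy; subst hy; exact hex
      · rwa [getLast?_cons_of_ne_nil u hmne]
      · intro y; exact List.mem_cons_of_mem _ (hcovm y)
      · rw [dropLast_cons_of_ne_nil u hmne]
        intro h
        rcases List.mem_cons.1 h with h | h
        · exact hvu h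
        · exact hndm h
    · refine ⟨(isWalk_iff E _).2 ⟨by simp, List.isChain_cons.2 ⟨heu, hcm⟩⟩, by simp, ?_, ?_, ?_⟩
      · rwa [getLast?_cons_of_ne_nil u hmne]
      · intro y
        by_cases hy : y = u
        · subst hy; simp
        · exact List.mem_cons_of_mem _ (hcovm y hy)
      · rw [dropLast_cons_of_ne_nil u hmne]
        intro h
        rcases List.mem_cons.1 h with h | h
        · exact hvu h
        · exact hndm h

lemma tail_ne_nil (h2 : 2 ≤ Fintype.card V) {u v : V} {l : List V}
    (hct : IsCoverTour E u v l) : l.tail ≠ [] := by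
  obtain ⟨w, hw⟩ := Fintype.exists_ne_of_one_lt_card (by omega) u
  obtain ⟨hw', hh, -, hcov, -⟩ := hct
  intro h
  cases l with
  | nil => exact (isWalk_iff E _).1 hw' |>.1 rfl
  | cons a t =>
    simp at h hh
    subst h hh
    have := hcov w; simp at this; exact hw this

/-- First-step decomposition. -/
lemma identity1 (h2 : 2 ≤ Fintype.card V) (u v : V) (hvu : v ≠ u) :
    coverProb E u v =
      (deg E u)⁻¹ * ((∑ x ∈ outNbrs E u, coverProb E x v) + CP E (Tail2 E u v)) := by
  classical
  rw [coverProb_eq_CP]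
  have hrange : Function.support (Set.indicator {l | IsCoverTour E u v l} (walkWt E))
      ⊆ Set.range (fun m : List V => u :: m) := by
    intro l hl
    have hct : IsCoverTour E u v l := by
      by_contra h
      exact hl (Set.indicator_of_notMem
        (show l ∉ {l | IsCoverTour E u v l} from h) _)
    obtain ⟨-, hh, -⟩ := hct
    cases l with
    | nil => simp at hh
    | cons a t => simp at hh; subst hh; exact ⟨t, rfl⟩
  have key := Function.Injective.tsum_eq (g := fun m : List V => u :: m)
    (fun a b h => by simpa using h) hrange
  rw [CP, ← key]
  have point : ∀ m : List V,
      Set.indicator {l | IsCoverTour E u v l} (walkWt E) (u :: m) =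
      (deg E u)⁻¹ * (Set.indicator (Tail1 E u v) (walkWt E) m
        + Set.indicator (Tail2 E u v) (walkWt E) m) := by
    intro m
    by_cases hct : IsCoverTour E u v (u :: m)
    · have hmne : m ≠ [] := tail_ne_nil E h2 hct
      rw [Set.indicator_of_mem (show (u :: m) ∈ {l | IsCoverTour E u v l} from hct), walkWt_cons E u m hmne]
      rcases (tail_mem_iff E h2 u v hvu m).1 hct with ⟨h1, h2'⟩ | ⟨h1, h2'⟩
      · rw [Set.indicator_of_mem h1, Set.indicator_of_notMem h2', add_zero]
      · rw [Set.indicator_of_mem h1, Set.indicator_of_notMem h2', zero_add]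
    · rw [Set.indicator_of_notMem (show (u :: m) ∉ {l | IsCoverTour E u v l} from hct)]
      have hdisj : ∀ {m' : List V}, m' ∈ Tail1 E u v → m' ∈ Tail2 E u v → False := by
        rintro m' ⟨x, hx, hex, hctm⟩ h2'
        exact h2'.2.2.2.1 (hctm.2.2.2.1 u)
      have h1 : m ∉ Tail1 E u v := fun h => hct ((tail_mem_iff E h2 u v hvu m).2
        (by by_cases h' : m ∈ Tail2 E u v
            · exact absurd h' (fun h'' => hdisj h h'')
            · exact Or.inl ⟨h, h'⟩))
      have h2'' : m ∉ Tail2 E u v := fun h => hct ((tail_mem_iff E h2 u v hvu m).2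
        (Or.inr ⟨h, fun h1' => hdisj h1' h⟩))
      rw [Set.indicator_of_notMem h1, Set.indicator_of_notMem h2'']
      simp
  rw [tsum_congr point, ENNReal.tsum_mul_left, ENNReal.tsum_add]
  congr 1
  congr 1
  -- ∑' m, indicator (Tail1) = ∑ x in outNbrs, coverProb x v
  have point2 : ∀ m : List V, Set.indicator (Tail1 E u v) (walkWt E) m =
      ∑ x ∈ outNbrs E u, Set.indicator {l | IsCoverTour E x v l} (walkWt E) m := by
    intro m
    by_cases h1 : m ∈ Tail1 E u v
    · obtain ⟨x, hx, hex, hctx⟩ := h1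
      rw [Set.indicator_of_mem (show m ∈ Tail1 E u v from ⟨x, hx, hex, hctx⟩)]
      rw [Finset.sum_eq_single x]
      · rw [Set.indicator_of_mem (show m ∈ {l | IsCoverTour E x v l} from hctx)]
      · intro y hy hyx
        apply Set.indicator_of_notMem
        intro (hcty : IsCoverTour E y v m)
        have := hcty.2.1
        rw [hx] at this
        simp at this
        exact hyx this.symm
      · intro hx'
        exact absurd (by simp [outNbrs, hex]) hx'
    · rw [Set.indicator_of_notMem h1]
      symm
      apply Finset.sum_eq_zero
      intro x hx
      apply Set.indicator_of_notMem
      intro (hctx : IsCoverTour E x v m)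
      refine h1 ⟨x, hctx.2.1, ?_, hctx⟩
      simpa [outNbrs] using hx
  rw [tsum_congr point2, Summable.tsum_finsetSum (fun i _ => ENNReal.summable)]
  apply Finset.sum_congr rfl
  intro x hx
  rw [coverProb_eq_CP, CP]

end CoverProof
namespace CoverProof
set_option linter.unusedSectionVars false
attribute [local instance] Classical.propDecidable

variable {V : Type*} [Fintype V] (E : V → V → Prop) [DecidableRel E]

/-- all walks of length `n+1` starting at `u` -/
noncomputable def walksFrom : ℕ → V → Finset (List V)
  | 0, u => {[u]}
  | (n+1), u => (outNbrs E u).biUnion (fun x => (walksFrom n x).image (List.cons u))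

lemma mem_walksFrom : ∀ (n : ℕ) (u : V) (l : List V),
    l ∈ walksFrom E n u ↔ l.length = n + 1 ∧ l.IsChain E ∧ l.head? = some u
  | 0, u, l => by
      simp only [walksFrom, Finset.mem_singleton]
      constructor
      · rintro rfl; simp
      · rintro ⟨h1, -, h3⟩
        cases l with
        | nil => simp at h3
        | cons a t =>
          simp at h3 h1
          subst h3
          rw [h1]
  | (n+1), u, l => by
      simp only [walksFrom, Finset.mem_biUnion, Finset.mem_image]
      constructor
      · rintro ⟨x, hx, m, hm, rfl⟩
        obtain ⟨h1, h2, h3⟩ := (mem_walksFrom n x m).1 hm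
        have hmne : m ≠ [] := by intro h; rw [h] at h1; simp at h1
        refine ⟨by simp [h1], List.isChain_cons.2 ⟨?_, h2⟩, by simp⟩
        intro y hy; rw [h3] at hy; simp at hy; subst hy
        simpa [outNbrs] using hx
      · rintro ⟨h1, h2, h3⟩
        cases l with
        | nil => simp at h3
        | cons a m =>
          simp at h3; subst h3
          have hmne : m ≠ [] := by
            intro h; rw [h] at h1; simp at h1
          refine ⟨m.head hmne, ?_, m, ?_, rfl⟩
          · have := (List.isChain_cons.1 h2).1 (m.head hmne) (List.head?_eq_head hmne)
            simpa [outNbrs] using this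
          · exact (mem_walksFrom n (m.head hmne) m).2
              ⟨by simpa using h1, (List.isChain_cons.1 h2).2, List.head?_eq_head hmne⟩

lemma walksFrom_ne_nil {n : ℕ} {u : V} {l : List V} (h : l ∈ walksFrom E n u) : l ≠ [] := by
  obtain ⟨h1, -, -⟩ := (mem_walksFrom E n u l).1 h
  intro h'; rw [h'] at h1; simp at h1

lemma walksFrom_sum_one (hout : ∀ u : V, (outNbrs E u).Nonempty) :
    ∀ (n : ℕ) (u : V), ∑ l ∈ walksFrom E n u, walkWt E l = 1
  | 0, u => by simp [walksFrom, walkWt]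
  | (n+1), u => by
      rw [walksFrom, Finset.sum_biUnion]
      · have : ∀ x ∈ outNbrs E u,
            (∑ l ∈ (walksFrom E n x).image (List.cons u), walkWt E l) = (deg E u)⁻¹ := by
          intro x hx
          rw [Finset.sum_image (by intro a _ b _ h; simpa using h)]
          have : ∀ m ∈ walksFrom E n x, walkWt E (u :: m) = (deg E u)⁻¹ * walkWt E m := by
            intro m hm
            exact walkWt_cons E u m (walksFrom_ne_nil E hm)
          rw [Finset.sum_congr rfl this, ← Finset.mul_sum, walksFrom_sum_one hout n x, mul_one]
        rw [Finset.sum_congr rfl this, Finset.sum_const, nsmul_eq_mul]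
        show (((outNbrs E u).card : ℝ≥0∞)) * (deg E u)⁻¹ = 1
        exact ENNReal.mul_inv_cancel (deg_ne_zero E hout u) (deg_ne_top E u)
      · intro x hx y hy hxy
        apply Finset.disjoint_left.2
        rintro l hlx hly
        simp only [Finset.mem_image] at hlx hly
        obtain ⟨m, hm, rfl⟩ := hlx
        obtain ⟨m', hm', he⟩ := hly
        have hmm : m' = m := by simpa using he
        rw [hmm] at hm'
        obtain ⟨-, -, h3⟩ := (mem_walksFrom E n x m).1 hm
        obtain ⟨-, -, h3'⟩ := (mem_walksFrom E n y m).1 hm'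
        rw [h3] at h3'
        simp at h3'
        exact hxy (by rw [h3'])

lemma getLast?_eq_some_getLastD {l : List V} (h : l ≠ []) (d : V) :
    l.getLast? = some (l.getLastD d) := by
  cases l with
  | nil => exact absurd rfl h
  | cons a t =>
    rw [List.getLast?_eq_getLast (by simp), List.getLastD_eq_getLast?,
      List.getLast?_eq_getLast (by simp)]
    rfl

lemma getLastD_irrel {l : List V} (h : l ≠ []) (d d' : V) : l.getLastD d = l.getLastD d' := by
  have h1 := getLast?_eq_some_getLastD h d
  have h2 := getLast?_eq_some_getLastD h d'
  rw [h1] at h2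
  simpa using h2

/-- decomposition of the sum over walks of length `a+b` -/
lemma split_sum : ∀ (a b : ℕ) (u : V) (f : List V → ℝ≥0∞),
    ∑ l ∈ walksFrom E (a + b) u, f l =
      ∑ p ∈ walksFrom E a u, ∑ q ∈ walksFrom E b (p.getLastD u), f (p ++ q.tail)
  | 0, b, u, f => by
      simp only [walksFrom, Finset.sum_singleton, Nat.zero_add]
      apply Finset.sum_congr rfl
      intro q hq
      obtain ⟨h1, h2, h3⟩ := (mem_walksFrom E b u q).1 hq
      cases q with
      | nil => simp at h3
      | cons a t => simp at h3; subst h3; rfl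
  | (a+1), b, u, f => by
      have hrw : a + 1 + b = (a + b) + 1 := by omega
      rw [hrw]
      show ∑ l ∈ walksFrom E ((a+b)+1) u, f l = _
      rw [walksFrom, Finset.sum_biUnion]
      · conv_rhs => rw [walksFrom]
        rw [Finset.sum_biUnion]
        · apply Finset.sum_congr rfl
          intro x hx
          rw [Finset.sum_image (by intro c _ d _ h; simpa using h),
            Finset.sum_image (by intro c _ d _ h; simpa using h)]
          have := split_sum a b x (fun l => f (u :: l))
          rw [this]
          apply Finset.sum_congr rfl
          intro p hp
          have hpne : p ≠ [] := walksFrom_ne_nil E hp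
          have hgl : (u :: p).getLastD u = p.getLastD x := by
            cases p with
            | nil => exact absurd rfl hpne
            | cons c t =>
              rw [List.getLastD_cons]
              exact getLastD_irrel (by simp) u x
          rw [hgl]
          rfl
        · intro x hx y hy hxy
          apply Finset.disjoint_left.2
          rintro l hlx hly
          simp only [Finset.mem_image] at hlx hly
          obtain ⟨m, hm, rfl⟩ := hlx
          obtain ⟨m', hm', he⟩ := hly
          have hmm : m' = m := by simpa using he
          rw [hmm] at hm'
          obtain ⟨-, -, h3⟩ := (mem_walksFrom E a x m).1 hm
          obtain ⟨-, -, h3'⟩ := (mem_walksFrom E a y m).1 hm'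
          rw [h3] at h3'; simp at h3'
          exact hxy (by rw [h3'])
      · intro x hx y hy hxy
        apply Finset.disjoint_left.2
        rintro l hlx hly
        simp only [Finset.mem_image] at hlx hly
        obtain ⟨m, hm, rfl⟩ := hlx
        obtain ⟨m', hm', he⟩ := hly
        have hmm : m' = m := by simpa using he
        rw [hmm] at hm'
        obtain ⟨-, -, h3⟩ := (mem_walksFrom E (a+b) x m).1 hm
        obtain ⟨-, -, h3'⟩ := (mem_walksFrom E (a+b) y m).1 hm'
        rw [h3] at h3'; simp at h3'
        exact hxy (by rw [h3'])

/-- total weight of all `n`-step extensions of a walk `p` equals the weight of `p`. -/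
lemma ext_sum (hout : ∀ u : V, (outNbrs E u).Nonempty) (n : ℕ) {p : List V} (hp : p ≠ [])
    (d : V) : ∑ q ∈ walksFrom E n (p.getLastD d), walkWt E (p ++ q.tail) = walkWt E p := by
  have : ∀ q ∈ walksFrom E n (p.getLastD d), walkWt E (p ++ q.tail) = walkWt E p * walkWt E q := by
    intro q hq
    apply walkWt_join E p q hp (walksFrom_ne_nil E hq)
    obtain ⟨-, -, h3⟩ := (mem_walksFrom E n _ q).1 hq
    rw [h3, getLast?_eq_some_getLastD hp d]
  rw [Finset.sum_congr rfl this, ← Finset.mul_sum, walksFrom_sum_one E hout n, mul_one]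

end CoverProof
namespace CoverProof
set_option linter.unusedSectionVars false
attribute [local instance] Classical.propDecidable

variable {V : Type*} [Fintype V] (E : V → V → Prop) [DecidableRel E]

lemma exists_pad (hout : ∀ u : V, (outNbrs E u).Nonempty) :
    ∀ (k : ℕ) (l : List V), l ≠ [] → l.IsChain E →
    ∃ l', l <+: l' ∧ l' ≠ [] ∧ l'.IsChain E ∧ l'.head? = l.head? ∧ l'.length = l.length + k := by
  intro k
  induction k with
  | zero => intro l h1 h2; exact ⟨l, List.prefix_refl l, h1, h2, rfl, rfl⟩
  | succ k ih =>
    intro l h1 h2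
    obtain ⟨l', hpre, hne, hc, hh, hlen⟩ := ih l h1 h2
    obtain ⟨x, hx⟩ := hout (l'.getLast hne)
    have hex : E (l'.getLast hne) x := by simpa [outNbrs] using hx
    refine ⟨l' ++ [x], hpre.trans ⟨[x], rfl⟩, by simp, ?_, ?_, by simp [hlen]; omega⟩
    · rw [List.isChain_append]
      refine ⟨hc, by simp, ?_⟩
      intro a ha b hb
      simp at hb; subst hb
      rw [List.getLast?_eq_getLast hne] at ha
      simp at ha; subst ha
      exact hex
    · rw [← hh]
      cases l' with
      | nil => exact absurd rfl hne
      | cons a t => simp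

lemma exists_eps (hconn : Conn E) (hout : ∀ u : V, (outNbrs E u).Nonempty) [Nonempty V] :
    ∃ (N : ℕ) (ε : ℝ≥0∞), 0 < ε ∧
      ∀ a : V, ∃ l ∈ walksFrom E N a, (∀ x : V, x ∈ l) ∧ ε ≤ walkWt E l := by
  have H := cover_walk E hconn
  choose w h1 h2 h3 h4 using H
  set N := Finset.univ.sup (fun a : V => (w a).length - 1) with hN
  have key : ∀ a : V, ∃ l ∈ walksFrom E N a, (∀ x : V, x ∈ l) := by
    intro a
    have hle : (w a).length - 1 ≤ N := Finset.le_sup (f := fun a : V => (w a).length - 1) (Finset.mem_univ a)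
    obtain ⟨l', hpre, hne, hc, hh, hlen⟩ :=
      exists_pad E hout (N - ((w a).length - 1)) (w a) (h1 a) (h2 a)
    have hlp : 1 ≤ (w a).length := List.length_pos_iff.2 (h1 a)
    refine ⟨l', (mem_walksFrom E N a l').2 ⟨by omega, hc, by rw [hh, h3 a]⟩,
      fun x => hpre.subset (h4 a x)⟩
  choose wa hw hcov using key
  refine ⟨N, Finset.univ.inf' Finset.univ_nonempty (fun a => walkWt E (wa a)), ?_,
    fun a => ⟨wa a, hw a, hcov a, Finset.inf'_le _ (Finset.mem_univ a)⟩⟩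
  rw [Finset.lt_inf'_iff]
  intro a _
  exact walkWt_pos E (wa a)

lemma NC_one (hout : ∀ u : V, (outNbrs E u).Nonempty) {N : ℕ} {ε : ℝ≥0∞}
    (hNe : ∀ a : V, ∃ l ∈ walksFrom E N a, (∀ x : V, x ∈ l) ∧ ε ≤ walkWt E l) (a : V) :
    ∑ q ∈ (walksFrom E N a).filter (fun l => ¬ ∀ x : V, x ∈ l), walkWt E q ≤ 1 - ε := by
  obtain ⟨l₀, hl₀, hcov₀, hε₀⟩ := hNe a
  have hsub : (walksFrom E N a).filter (fun l => ¬ ∀ x : V, x ∈ l) ⊆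
      (walksFrom E N a).erase l₀ := by
    intro l hl
    rw [Finset.mem_filter] at hl
    rw [Finset.mem_erase]
    exact ⟨fun h => hl.2 (h ▸ hcov₀), hl.1⟩
  calc ∑ q ∈ (walksFrom E N a).filter (fun l => ¬ ∀ x : V, x ∈ l), walkWt E q
      ≤ ∑ q ∈ (walksFrom E N a).erase l₀, walkWt E q :=
        Finset.sum_le_sum_of_subset hsub
    _ = 1 - walkWt E l₀ := by
        have := Finset.sum_erase_add (walksFrom E N a) (walkWt E) hl₀
        rw [walksFrom_sum_one E hout N a] at this
        exact ENNReal.eq_sub_of_add_eq (walkWt_ne_top E hout l₀) this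
    _ ≤ 1 - ε := tsub_le_tsub_left hε₀ 1

lemma NC_decay (hout : ∀ u : V, (outNbrs E u).Nonempty) {N : ℕ} {ε : ℝ≥0∞}
    (hNe : ∀ a : V, ∃ l ∈ walksFrom E N a, (∀ x : V, x ∈ l) ∧ ε ≤ walkWt E l) :
    ∀ (m : ℕ) (u : V),
      ∑ l ∈ (walksFrom E (m * N) u).filter (fun l => ¬ ∀ x : V, x ∈ l), walkWt E l ≤
        (1 - ε) ^ m := by
  intro m
  induction m with
  | zero =>
    intro u
    calc ∑ l ∈ (walksFrom E (0 * N) u).filter (fun l => ¬ ∀ x : V, x ∈ l), walkWt E l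
        ≤ ∑ l ∈ walksFrom E (0 * N) u, walkWt E l :=
          Finset.sum_le_sum_of_subset (Finset.filter_subset _ _)
      _ = 1 := walksFrom_sum_one E hout _ u
      _ = (1 - ε) ^ 0 := by simp
  | succ m ih =>
    intro u
    have hsm : (m + 1) * N = m * N + N := by ring
    rw [hsm, Finset.sum_filter, split_sum E (m * N) N u]
    have inner : ∀ p ∈ walksFrom E (m * N) u,
        (∑ q ∈ walksFrom E N (p.getLastD u),
          if ¬ ∀ x : V, x ∈ p ++ q.tail then walkWt E (p ++ q.tail) else 0) ≤
        (if ¬ ∀ x : V, x ∈ p then walkWt E p else 0) * (1 - ε) := by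
      intro p hp
      obtain ⟨hplen, hpc, hph⟩ := (mem_walksFrom E _ u p).1 hp
      have hpne : p ≠ [] := walksFrom_ne_nil E hp
      by_cases hcp : ∀ x : V, x ∈ p
      · rw [if_neg (by push_neg; simpa using hcp)]
        rw [Finset.sum_eq_zero, zero_mul]
        intro q hq
        rw [if_neg]
        push_neg
        intro x
        exact List.mem_append_left _ (hcp x)
      · rw [if_pos hcp]
        have hstep : ∀ q ∈ walksFrom E N (p.getLastD u),
            (if ¬ ∀ x : V, x ∈ p ++ q.tail then walkWt E (p ++ q.tail) else 0) ≤
              walkWt E p * (if ¬ ∀ x : V, x ∈ q then walkWt E q else 0) := by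
          intro q hq
          obtain ⟨hqlen, hqc, hqh⟩ := (mem_walksFrom E _ _ q).1 hq
          have hqne : q ≠ [] := walksFrom_ne_nil E hq
          have hlink : p.getLast? = q.head? := by
            rw [hqh, getLast?_eq_some_getLastD hpne u]
          by_cases hcpq : ∀ x : V, x ∈ p ++ q.tail
          · rw [if_neg (by push_neg; simpa using hcpq)]
            positivity
          · rw [if_pos hcpq]
            have hncq : ¬ ∀ x : V, x ∈ q := by
              intro hcq
              apply hcpq
              intro x
              obtain ⟨-, -, -, -, hmem⟩ := join_spec E hpne hqne hlink hpc hqc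
              exact (hmem x).2 (Or.inr (hcq x))
            rw [if_pos hncq, walkWt_join E p q hpne hqne hlink]
        calc _ ≤ ∑ q ∈ walksFrom E N (p.getLastD u),
              walkWt E p * (if ¬ ∀ x : V, x ∈ q then walkWt E q else 0) :=
              Finset.sum_le_sum hstep
          _ = walkWt E p * ∑ q ∈ (walksFrom E N (p.getLastD u)).filter
                (fun l => ¬ ∀ x : V, x ∈ l), walkWt E q := by
              rw [← Finset.mul_sum, Finset.sum_filter]
          _ ≤ walkWt E p * (1 - ε) :=
              mul_le_mul_right (NC_one E hout hNe _) _
    calc _ ≤ ∑ p ∈ walksFrom E (m * N) u,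
          (if ¬ ∀ x : V, x ∈ p then walkWt E p else 0) * (1 - ε) :=
          Finset.sum_le_sum inner
      _ = (∑ p ∈ (walksFrom E (m * N) u).filter (fun l => ¬ ∀ x : V, x ∈ l), walkWt E p)
            * (1 - ε) := by
              rw [Finset.sum_mul, Finset.sum_filter]
              exact Finset.sum_congr rfl (fun p _ => by rw [ite_mul, zero_mul])
      _ ≤ (1 - ε) ^ m * (1 - ε) := mul_le_mul_left (ih u) _
      _ = (1 - ε) ^ (m + 1) := by rw [pow_succ]

end CoverProof
namespace CoverProof
set_option linter.unusedSectionVars false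
attribute [local instance] Classical.propDecidable

variable {V : Type*} [Fintype V] (E : V → V → Prop) [DecidableRel E]

/-- walks which are cover tours from `u` (with arbitrary endpoint) -/
def CoverAll (u : V) : Set (List V) :=
  {l | ∃ v, IsCoverTour E u v l}

lemma coverAll_ne_nil {u : V} {l : List V} (h : l ∈ CoverAll E u) : l ≠ [] := by
  obtain ⟨v, hct⟩ := h
  exact ((isWalk_iff E l).1 hct.1).1

/-- cover tours are mutually non-prefix: two cover tours that are prefixes of a common
list are equal. -/
lemma coverTour_prefix_unique {u : V} {p p' l : List V} (hp : p ∈ CoverAll E u)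
    (hp' : p' ∈ CoverAll E u) (h1 : p <+: l) (h2 : p' <+: l) : p = p' := by
  have aux : ∀ {a b : List V}, a ∈ CoverAll E u → b ∈ CoverAll E u → a <+: b → a = b := by
    rintro a b ⟨v, hcta⟩ ⟨v', hctb⟩ ⟨r, rfl⟩
    cases r with
    | nil => simp
    | cons c t =>
      exfalso
      obtain ⟨-, -, hlb, -, hndb⟩ := hctb
      have hv'a : v' ∈ a := hcta.2.2.2.1 v'
      apply hndb
      rw [List.dropLast_append_of_ne_nil (by simp)]
      exact List.mem_append_left _ hv'a
  rcases List.prefix_or_prefix_of_prefix h1 h2 with h | h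
  · exact aux hp hp' h
  · exact (aux hp' hp h).symm

lemma cover_filter_le (hout : ∀ u : V, (outNbrs E u).Nonempty) [Nonempty V] (K : ℕ) (u : V) :
    ∑ l ∈ (walksFrom E K u).filter (fun l => ∀ x : V, x ∈ l), walkWt E l ≤
      CP E (CoverAll E u) := by
  set C := (walksFrom E K u).filter (fun l => ∀ x : V, x ∈ l) with hC
  have H : ∀ l ∈ C, ∃ p, p <+: l ∧ p ∈ CoverAll E u := by
    intro l hl
    rw [hC, Finset.mem_filter] at hl
    obtain ⟨hlw, hcov⟩ := hl
    obtain ⟨hlen, hc, hh⟩ := (mem_walksFrom E K u l).1 hlw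
    obtain ⟨p, v, hpre, hct⟩ := coverTour_prefix E (walksFrom_ne_nil E hlw) hc hh hcov
    exact ⟨p, hpre, v, hct⟩
  choose! f hf1 hf2 using H
  have hmaps : ∀ l ∈ C, f l ∈ C.image f := fun l hl => Finset.mem_image_of_mem f hl
  have step1 : ∑ l ∈ C, walkWt E l =
      ∑ p ∈ C.image f, ∑ l ∈ C.filter (fun l => f l = p), walkWt E l :=
    (Finset.sum_fiberwise_of_maps_to hmaps _).symm
  have step2 : ∀ p ∈ C.image f, ∑ l ∈ C.filter (fun l => f l = p), walkWt E l ≤ walkWt E p := by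
    intro p hp
    obtain ⟨l₀, hl₀, rfl⟩ := Finset.mem_image.1 hp
    set p := f l₀ with hpdef
    have hpca : p ∈ CoverAll E u := hf2 l₀ hl₀
    have hpne : p ≠ [] := coverAll_ne_nil E hpca
    have hplen : 1 ≤ p.length := List.length_pos_iff.2 hpne
    have hple : p.length ≤ K + 1 := by
      have h' := (hf1 l₀ hl₀).length_le
      rw [← hpdef] at h'
      have hlen := ((mem_walksFrom E K u l₀).1 ((Finset.mem_filter.1 hl₀).1)).1
      omega
    have hsub : C.filter (fun l => f l = p) ⊆
        (walksFrom E (K + 1 - p.length) (p.getLastD u)).image (fun q => p ++ q.tail) := by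
      intro l hl
      rw [Finset.mem_filter] at hl
      obtain ⟨hlC, hfl⟩ := hl
      have hpre : p <+: l := hfl ▸ hf1 l hlC
      obtain ⟨r, hr⟩ := hpre
      rw [Finset.mem_image]
      refine ⟨p.getLastD u :: r, ?_, ?_⟩
      · obtain ⟨hlen, hc, hh⟩ := (mem_walksFrom E K u l).1 ((Finset.mem_filter.1 hlC).1)
        refine (mem_walksFrom E _ _ _).2 ⟨?_, ?_, rfl⟩
        · simp only [List.length_cons]
          rw [← hr] at hlen
          simp at hlen
          omega
        · have hsuf : p.getLastD u :: r <:+ l := by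
            refine ⟨p.dropLast, ?_⟩
            rw [← hr]
            conv_rhs => rw [← List.dropLast_append_getLast hpne]
            rw [List.append_assoc]
            congr 2
            rw [List.getLastD_eq_getLast?, List.getLast?_eq_getLast hpne]
            rfl
          exact hc.suffix hsuf
      · simp only [List.tail_cons]
        exact hr
    calc ∑ l ∈ C.filter (fun l => f l = p), walkWt E l
        ≤ ∑ l ∈ (walksFrom E (K + 1 - p.length) (p.getLastD u)).image
            (fun q => p ++ q.tail), walkWt E l := Finset.sum_le_sum_of_subset hsub
      _ = ∑ q ∈ walksFrom E (K + 1 - p.length) (p.getLastD u), walkWt E (p ++ q.tail) := by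
          apply Finset.sum_image
          intro q hq q' hq' he
          have ht : q.tail = q'.tail := by
            have := List.append_cancel_left he
            exact this
          obtain ⟨-, -, hh⟩ := (mem_walksFrom E _ _ q).1 hq
          obtain ⟨-, -, hh'⟩ := (mem_walksFrom E _ _ q').1 hq'
          cases q with
          | nil => simp at hh
          | cons a t =>
            cases q' with
            | nil => simp at hh'
            | cons a' t' =>
              simp at hh hh' ht
              rw [hh, hh', ht]
      _ = walkWt E p := ext_sum E hout _ hpne u
  have step3 : ∑ p ∈ C.image f, walkWt E p ≤ CP E (CoverAll E u) := by
    have : ∀ p ∈ C.image f, walkWt E p = Set.indicator (CoverAll E u) (walkWt E) p := by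
      intro p hp
      obtain ⟨l₀, hl₀, rfl⟩ := Finset.mem_image.1 hp
      rw [Set.indicator_of_mem (hf2 l₀ hl₀)]
    rw [Finset.sum_congr rfl this]
    exact ENNReal.sum_le_tsum _
  calc ∑ l ∈ C, walkWt E l ≤ ∑ p ∈ C.image f, walkWt E p := by
        rw [step1]; exact Finset.sum_le_sum step2
    _ ≤ CP E (CoverAll E u) := step3

lemma CP_CA_le_one (hout : ∀ u : V, (outNbrs E u).Nonempty) (u : V) :
    CP E (CoverAll E u) ≤ 1 := by
  rw [CP, ENNReal.tsum_eq_iSup_sum]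
  apply iSup_le
  intro F
  set F' := F.filter (fun l => l ∈ CoverAll E u) with hF'
  have hFeq : ∑ l ∈ F, Set.indicator (CoverAll E u) (walkWt E) l = ∑ p ∈ F', walkWt E p := by
    rw [hF', Finset.sum_filter]
    apply Finset.sum_congr rfl
    intro l _
    by_cases h : l ∈ CoverAll E u
    · rw [if_pos h, Set.indicator_of_mem h]
    · rw [if_neg h, Set.indicator_of_notMem h]
  rw [hFeq]
  rcases Finset.eq_empty_or_nonempty F' with he | hne
  · simp [he]
  set K := F'.sup (fun p => p.length) with hK
  have hK1 : 1 ≤ K := by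
    obtain ⟨p, hp⟩ := hne
    have : p.length ≤ K := Finset.le_sup (f := fun p : List V => p.length) hp
    have hpca : p ∈ CoverAll E u := (Finset.mem_filter.1 hp).2
    have := List.length_pos_iff.2 (coverAll_ne_nil E hpca)
    omega
  have hmem : ∀ p ∈ F', p ∈ CoverAll E u := fun p hp => (Finset.mem_filter.1 hp).2
  have step1 : ∑ p ∈ F', walkWt E p =
      ∑ p ∈ F', ∑ q ∈ walksFrom E (K - p.length) (p.getLastD u), walkWt E (p ++ q.tail) := by
    apply Finset.sum_congr rfl
    intro p hp
    exact (ext_sum E hout _ (coverAll_ne_nil E (hmem p hp)) u).symm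
  rw [step1, Finset.sum_sigma' F' (fun p => walksFrom E (K - p.length) (p.getLastD u))
    (fun p q => walkWt E (p ++ q.tail))]
  set Sg := F'.sigma (fun p => walksFrom E (K - p.length) (p.getLastD u)) with hSg
  have hinj : ∀ x ∈ Sg, ∀ y ∈ Sg,
      (fun x : Σ _ : List V, List V => x.1 ++ x.2.tail) x =
      (fun x : Σ _ : List V, List V => x.1 ++ x.2.tail) y → x = y := by
    rintro ⟨p, q⟩ hx ⟨p', q'⟩ hy he
    simp only at he
    rw [hSg, Finset.mem_sigma] at hx hy
    have hpca := hmem p hx.1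
    have hp'ca := hmem p' hy.1
    have hpp' : p = p' :=
      coverTour_prefix_unique E hpca hp'ca ⟨q.tail, rfl⟩ ⟨q'.tail, he.symm ▸ rfl⟩
    subst hpp'
    have ht : q.tail = q'.tail := List.append_cancel_left he
    obtain ⟨-, -, hh⟩ := (mem_walksFrom E _ _ q).1 hx.2
    obtain ⟨-, -, hh'⟩ := (mem_walksFrom E _ _ q').1 hy.2
    congr 1
    cases q with
    | nil => simp at hh
    | cons a t =>
      cases q' with
      | nil => simp at hh'
      | cons a' t' =>
        simp at hh hh' ht
        rw [hh, hh', ht]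
  have himg : ∑ x ∈ Sg, walkWt E (x.1 ++ x.2.tail) =
      ∑ l ∈ Sg.image (fun x : Σ _ : List V, List V => x.1 ++ x.2.tail), walkWt E l :=
    (Finset.sum_image hinj).symm
  rw [himg]
  have hsub : Sg.image (fun x : Σ _ : List V, List V => x.1 ++ x.2.tail) ⊆
      walksFrom E (K - 1) u := by
    intro l hl
    obtain ⟨⟨p, q⟩, hx, rfl⟩ := Finset.mem_image.1 hl
    rw [hSg, Finset.mem_sigma] at hx
    dsimp only at hx ⊢
    have hpca := hmem p hx.1
    obtain ⟨v, hct⟩ := hpca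
    obtain ⟨hw, hh, -, -, -⟩ := hct
    rw [isWalk_iff] at hw
    obtain ⟨hqlen, hqc, hqh⟩ := (mem_walksFrom E _ _ q).1 hx.2
    have hqne : q ≠ [] := by intro h; rw [h] at hqh; simp at hqh
    have hlink : p.getLast? = q.head? := by
      rw [hqh, getLast?_eq_some_getLastD hw.1 u]
    obtain ⟨hne, hc, hhd, -, -⟩ := join_spec E hw.1 hqne hlink hw.2 hqc
    refine (mem_walksFrom E _ _ _).2 ⟨?_, hc, by rw [hhd, hh]⟩
    have hple : p.length ≤ K := Finset.le_sup (f := fun p : List V => p.length) hx.1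
    have hplen : 1 ≤ p.length := List.length_pos_iff.2 hw.1
    simp only [List.length_append, List.length_tail]
    omega
  calc _ ≤ ∑ l ∈ walksFrom E (K - 1) u, walkWt E l := Finset.sum_le_sum_of_subset hsub
    _ = 1 := walksFrom_sum_one E hout _ u

lemma CP_CA_eq_one (hconn : Conn E) (hout : ∀ u : V, (outNbrs E u).Nonempty) [Nonempty V]
    (u : V) : CP E (CoverAll E u) = 1 := by
  refine le_antisymm (CP_CA_le_one E hout u) ?_
  by_contra hlt
  push_neg at hlt
  obtain ⟨N, ε, hε, hNe⟩ := exists_eps E hconn hout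
  have hub := CP_CA_le_one E hout u
  have hm : ∀ m : ℕ, (1 : ℝ≥0∞) ≤ CP E (CoverAll E u) + (1 - ε) ^ m := by
    intro m
    have hsum := walksFrom_sum_one E hout (m * N) u
    rw [← Finset.sum_filter_add_sum_filter_not (walksFrom E (m * N) u)
      (fun l => ∀ x : V, x ∈ l)] at hsum
    calc (1 : ℝ≥0∞) = _ := hsum.symm
      _ ≤ CP E (CoverAll E u) + (1 - ε) ^ m :=
        add_le_add (cover_filter_le E hout (m * N) u) (NC_decay E hout hNe m u)
  have hδ : 0 < 1 - CP E (CoverAll E u) := tsub_pos_of_lt hlt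
  have hr1 : (1 : ℝ≥0∞) - ε < 1 :=
    ENNReal.sub_lt_self ENNReal.one_ne_top one_ne_zero hε.ne'
  have htend := ENNReal.tendsto_pow_atTop_nhds_zero_of_lt_one hr1
  obtain ⟨m, hm'⟩ := (htend.eventually_lt_const hδ).exists
  have h1 : (1 : ℝ≥0∞) ≤ CP E (CoverAll E u) + (1 - ε) ^ m := hm m
  have h2 : CP E (CoverAll E u) + (1 - ε) ^ m <
      CP E (CoverAll E u) + (1 - CP E (CoverAll E u)) :=
    ENNReal.add_lt_add_left (ne_top_of_le_ne_top ENNReal.one_ne_top hub) hm'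
  rw [add_tsub_cancel_of_le hub] at h2
  exact absurd (lt_of_le_of_lt h1 h2) (lt_irrefl _)

lemma sum_coverProb_eq (u : V) :
    ∑ v ∈ Finset.univ, coverProb E u v = CP E (CoverAll E u) := by
  have : ∀ v : V, coverProb E u v =
      ∑' l : List V, Set.indicator {l | IsCoverTour E u v l} (walkWt E) l := by
    intro v; rw [coverProb_eq_CP]; rfl
  rw [Finset.sum_congr rfl (fun v _ => this v),
    ← Summable.tsum_finsetSum (fun v _ => ENNReal.summable)]
  apply tsum_congr
  intro l
  by_cases hca : l ∈ CoverAll E u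
  · obtain ⟨v₀, hct⟩ := hca
    rw [Set.indicator_of_mem (show l ∈ CoverAll E u from ⟨v₀, hct⟩)]
    rw [Finset.sum_eq_single v₀]
    · rw [Set.indicator_of_mem (show l ∈ {l | IsCoverTour E u v₀ l} from hct)]
    · intro v _ hv
      apply Set.indicator_of_notMem
      intro (hct' : IsCoverTour E u v l)
      apply hv
      have h1 := hct.2.2.1
      have h2 := hct'.2.2.1
      rw [h1] at h2
      simpa using h2.symm
    · intro h; exact absurd (Finset.mem_univ v₀) h
  · rw [Set.indicator_of_notMem hca]
    apply Finset.sum_eq_zero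
    intro v _
    apply Set.indicator_of_notMem
    intro (hct : IsCoverTour E u v l)
    exact hca ⟨v, hct⟩

lemma coverProb_self (h2 : 2 ≤ Fintype.card V) (u : V) : coverProb E u u = 0 := by
  rw [coverProb_eq_CP, CP_eq_zero_iff]
  ext l
  simp only [Set.mem_setOf_eq, Set.mem_empty_iff_false, iff_false]
  rintro ⟨hw, hh, hl, hcov, hnd⟩
  obtain ⟨w, hwne⟩ := Fintype.exists_ne_of_one_lt_card (by omega) u
  cases l with
  | nil => exact ((isWalk_iff E _).1 hw).1 rfl
  | cons a t =>
    simp at hh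
    subst hh
    cases t with
    | nil =>
      have := hcov w
      simp at this
      exact hwne this
    | cons b t' =>
      apply hnd
      rw [dropLast_cons_of_ne_nil _ (by simp)]
      exact List.mem_cons_self

lemma coverProb_value (h3 : 3 ≤ Fintype.card V) (hconn : Conn E)
    (hout : ∀ u : V, (outNbrs E u).Nonempty)
    (heq : ∀ u v w : V, v ≠ u → w ≠ u → v ≠ w → coverProb E u v = coverProb E u w)
    {u v : V} (hvu : v ≠ u) :
    coverProb E u v = ((Fintype.card V - 1 : ℕ) : ℝ≥0∞)⁻¹ := by
  have : Nonempty V := by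
    rw [← Fintype.card_pos_iff]; omega
  have h1 : ∑ w ∈ Finset.univ, coverProb E u w = 1 := by
    rw [sum_coverProb_eq]; exact CP_CA_eq_one E hconn hout u
  rw [← Finset.add_sum_erase Finset.univ _ (Finset.mem_univ u), coverProb_self E (by omega) u,
    zero_add] at h1
  have hall : ∀ w ∈ Finset.univ.erase u, coverProb E u w = coverProb E u v := by
    intro w hw
    have hwu : w ≠ u := (Finset.mem_erase.1 hw).1
    by_cases hwv : w = v
    · rw [hwv]
    · exact heq u w v hwu hvu hwv
  rw [Finset.sum_congr rfl hall, Finset.sum_const, Finset.card_erase_of_mem (Finset.mem_univ u),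
    Finset.card_univ, nsmul_eq_mul] at h1
  have ha0 : ((Fintype.card V - 1 : ℕ) : ℝ≥0∞) ≠ 0 := by
    simp only [ne_eq, Nat.cast_eq_zero]
    omega
  have hat : ((Fintype.card V - 1 : ℕ) : ℝ≥0∞) ≠ ⊤ := ENNReal.natCast_ne_top _
  calc coverProb E u v = (((Fintype.card V - 1 : ℕ) : ℝ≥0∞)⁻¹ *
        ((Fintype.card V - 1 : ℕ) : ℝ≥0∞)) * coverProb E u v := by
        rw [ENNReal.inv_mul_cancel ha0 hat, one_mul]
    _ = ((Fintype.card V - 1 : ℕ) : ℝ≥0∞)⁻¹ := by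
        rw [mul_assoc, h1, mul_one]

end CoverProof
namespace CoverProof
set_option linter.unusedSectionVars false
attribute [local instance] Classical.propDecidable

variable {V : Type*} [Fintype V] (E : V → V → Prop) [DecidableRel E]

lemma cval_ne_zero (h3 : 3 ≤ Fintype.card V) : ((Fintype.card V - 1 : ℕ) : ℝ≥0∞)⁻¹ ≠ 0 := by
  simp only [ne_eq, ENNReal.inv_eq_zero]
  exact ENNReal.natCast_ne_top _

lemma cval_ne_top (h3 : 3 ≤ Fintype.card V) : ((Fintype.card V - 1 : ℕ) : ℝ≥0∞)⁻¹ ≠ ⊤ := by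
  simp only [ne_eq, ENNReal.inv_eq_top, Nat.cast_eq_zero]
  omega

/-- If `v` is not an out-neighbour of `u`, there is no walk from an out-neighbour of `u`
avoiding `u`, covering everything else, ending at the first visit to `v`. -/
lemma tail2_empty (h3 : 3 ≤ Fintype.card V) (hconn : Conn E)
    (hout : ∀ u : V, (outNbrs E u).Nonempty)
    (heq : ∀ u v w : V, v ≠ u → w ≠ u → v ≠ w → coverProb E u v = coverProb E u w)
    {u v : V} (hvu : v ≠ u) (hne : ¬ E u v) : Tail2 E u v = ∅ := by
  set c := ((Fintype.card V - 1 : ℕ) : ℝ≥0∞)⁻¹ with hc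
  have hid := identity1 E (by omega) u v hvu
  have hsum : ∑ x ∈ outNbrs E u, coverProb E x v = deg E u * c := by
    have : ∀ x ∈ outNbrs E u, coverProb E x v = c := by
      intro x hx
      have hxv : v ≠ x := by
        intro h
        subst h
        exact hne (by simpa [outNbrs] using hx)
      exact coverProb_value E h3 hconn hout heq hxv
    rw [Finset.sum_congr rfl this, Finset.sum_const, nsmul_eq_mul]
    rfl
  rw [coverProb_value E h3 hconn hout heq hvu, hsum] at hid
  have hmul := congrArg (fun z => deg E u * z) hid
  rw [← mul_assoc, ENNReal.mul_inv_cancel (deg_ne_zero E hout u) (deg_ne_top E u),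
    one_mul] at hmul
  have hfin : deg E u * c ≠ ⊤ :=
    ENNReal.mul_ne_top (deg_ne_top E u) (cval_ne_top (V := V) h3)
  have : deg E u * c + 0 = deg E u * c + CP E (Tail2 E u v) := by
    rw [add_zero]; exact hmul
  have hCP : CP E (Tail2 E u v) = 0 := ((ENNReal.add_right_inj hfin).1 this).symm
  exact (CP_eq_zero_iff E).1 hCP

/-- If `u` is an out-neighbour of `v`, there is a walk from an out-neighbour of `v`
avoiding `v`, covering everything else, ending at the first visit to `u`. -/
lemma tail2_nonempty (h3 : 3 ≤ Fintype.card V) (hconn : Conn E)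
    (hout : ∀ u : V, (outNbrs E u).Nonempty)
    (heq : ∀ u v w : V, v ≠ u → w ≠ u → v ≠ w → coverProb E u v = coverProb E u w)
    {u v : V} (hvu : v ≠ u) (hE : E v u) : (Tail2 E v u).Nonempty := by
  set c := ((Fintype.card V - 1 : ℕ) : ℝ≥0∞)⁻¹ with hc
  have hid := identity1 E (by omega) v u (Ne.symm hvu)
  have humem : u ∈ outNbrs E v := by simpa [outNbrs] using hE
  have hsum : ∑ x ∈ outNbrs E v, coverProb E x u =
      (((outNbrs E v).card - 1 : ℕ) : ℝ≥0∞) * c := by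
    rw [← Finset.add_sum_erase _ _ humem, coverProb_self E (by omega) u, zero_add]
    have : ∀ x ∈ (outNbrs E v).erase u, coverProb E x u = c := by
      intro x hx
      exact coverProb_value E h3 hconn hout heq (Ne.symm (Finset.mem_erase.1 hx).1)
    rw [Finset.sum_congr rfl this, Finset.sum_const, nsmul_eq_mul,
      Finset.card_erase_of_mem humem]
  rw [coverProb_value E h3 hconn hout heq (Ne.symm hvu), hsum] at hid
  have hmul := congrArg (fun z => deg E v * z) hid
  rw [← mul_assoc, ENNReal.mul_inv_cancel (deg_ne_zero E hout v) (deg_ne_top E v),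
    one_mul] at hmul
  have hdeg : deg E v = (((outNbrs E v).card - 1 : ℕ) : ℝ≥0∞) + 1 := by
    have hpos : 1 ≤ (outNbrs E v).card := Finset.card_pos.2 ⟨u, humem⟩
    rw [deg]
    rw [show (outNbrs E v).card = ((outNbrs E v).card - 1) + 1 by omega]
    push_cast
    ring
  rw [hdeg, add_mul, one_mul] at hmul
  have hfin : (((outNbrs E v).card - 1 : ℕ) : ℝ≥0∞) * c ≠ ⊤ :=
    ENNReal.mul_ne_top (ENNReal.natCast_ne_top _) (cval_ne_top (V := V) h3)
  have hCP : c = CP E (Tail2 E v u) := (ENNReal.add_right_inj hfin).1 hmul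
  have : CP E (Tail2 E v u) ≠ 0 := by rw [← hCP]; exact cval_ne_zero (V := V) h3
  rw [ne_eq, CP_eq_zero_iff E, ← ne_eq, ← Set.nonempty_iff_ne_empty] at this
  exact this

/-- extraction of a witness cover tour from a positive cover probability -/
lemma coverTour_exists (h3 : 3 ≤ Fintype.card V) (hconn : Conn E)
    (hout : ∀ u : V, (outNbrs E u).Nonempty)
    (heq : ∀ u v w : V, v ≠ u → w ≠ u → v ≠ w → coverProb E u v = coverProb E u w)
    {u v : V} (hvu : v ≠ u) : ∃ l, IsCoverTour E u v l := by
  have h := coverProb_value E h3 hconn hout heq hvu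
  have hne : coverProb E u v ≠ 0 := by rw [h]; exact cval_ne_zero (V := V) h3
  rw [coverProb_eq_CP, ne_eq, CP_eq_zero_iff E] at hne
  rw [← ne_eq, ← Set.nonempty_iff_ne_empty] at hne
  obtain ⟨l, hl⟩ := hne
  exact ⟨l, hl⟩

/-- decomposition of a cover tour -/
lemma coverTour_decomp (h2 : 2 ≤ Fintype.card V) {u v : V} {l : List V}
    (hct : IsCoverTour E u v l) :
    ∃ l₀, l = l₀ ++ [v] ∧ l₀ ≠ [] ∧ l₀.IsChain E ∧ l₀.head? = some u ∧ v ∉ l₀ ∧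
      (∀ w : V, w ≠ v → w ∈ l₀) := by
  obtain ⟨hw, hh, hl, hcov, hnd⟩ := hct
  rw [isWalk_iff] at hw
  have hsplit : l.dropLast ++ [v] = l := List.dropLast_append_getLast? v hl
  have hne : l.dropLast ≠ [] := by
    intro h
    obtain ⟨w, hwv⟩ := Fintype.exists_ne_of_one_lt_card (by omega) v
    have := hcov w
    rw [← hsplit, h] at this
    simp at this
    exact hwv this
  refine ⟨l.dropLast, hsplit.symm, hne, ?_, ?_, hnd, ?_⟩
  · exact hw.2.prefix ⟨[v], hsplit⟩
  · rw [← hh]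
    conv_rhs => rw [← hsplit]
    rw [List.head?_append_of_ne_nil _ hne]
  · intro w hwv
    have := hcov w
    rw [← hsplit] at this
    rcases List.mem_append.1 this with h | h
    · exact h
    · simp at h; exact absurd h hwv

end CoverProof
/-- Theorem 2: in a connected digraph (with at least 3 vertices, every vertex having an
out-neighbour) in which a random cover tour from any vertex is equally likely to end at any
other vertex, every edge is bidirected. -/
theorem stmt4 {V : Type*} [Fintype V] (E : V → V → Prop) [DecidableRel E]
    (h3 : 3 ≤ Fintype.card V) (hconn : Conn E)
    (hout : ∀ u : V, (outNbrs E u).Nonempty)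
    (heq : ∀ u v w : V, v ≠ u → w ≠ u → v ≠ w → coverProb E u v = coverProb E u w) :
    ∀ u v : V, E v u → E u v := by
  classical
  intro u v hEvu
  by_cases huv : v = u
  · subst huv; exact hEvu
  by_contra hne
  have hvu : v ≠ u := huv
  have hT2empty := CoverProof.tail2_empty E h3 hconn hout heq hvu hne
  obtain ⟨m, hm⟩ := CoverProof.tail2_nonempty E h3 hconn hout heq hvu hEvu
  obtain ⟨hmne, hmc, hmh, hvm, hmcov, hml, hund⟩ := hm
  set m₀ := m.dropLast with hm₀def
  have hsplitm : m₀ ++ [u] = m := List.dropLast_append_getLast? u hml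
  have hwit : ∃ w : V, w ≠ u ∧ w ≠ v := by
    have h2 : ({u, v} : Finset V).card ≤ 2 := (Finset.card_insert_le u {v}).trans (by simp)
    have hnonem : (Finset.univ \ ({u, v} : Finset V)).Nonempty := by
      rw [← Finset.card_pos, Finset.card_sdiff_of_subset (Finset.subset_univ _), Finset.card_univ]
      omega
    obtain ⟨w, hw⟩ := hnonem
    simp only [Finset.mem_sdiff, Finset.mem_insert, Finset.mem_singleton, Finset.mem_univ,
      true_and] at hw
    push_neg at hw
    exact ⟨w, hw.1, hw.2⟩
  obtain ⟨w₀, hw₀u, hw₀v⟩ := hwit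
  have hm₀ne : m₀ ≠ [] := by
    intro h
    have hw₀m := hmcov w₀ hw₀v
    rw [← hsplitm, h] at hw₀m
    simp at hw₀m
    exact hw₀u hw₀m
  have hm₀c : m₀.IsChain E := hmc.prefix ⟨[u], hsplitm⟩
  have hm₀sub : ∀ {z : V}, z ∈ m₀ → z ∈ m := by
    intro z hz
    rw [← hsplitm]
    exact List.mem_append_left _ hz
  set x := m₀.head hm₀ne with hxdef
  have hm₀h : m₀.head? = some x := List.head?_eq_head hm₀ne
  have hmhx : m.head? = some x := by
    rw [← hsplitm, List.head?_append_of_ne_nil _ hm₀ne, hm₀h]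
  have hEvx : E v x := hmh x hmhx
  have hxm₀ : x ∈ m₀ := List.head_mem hm₀ne
  have hum₀ : u ∉ m₀ := hund
  have hvm₀ : v ∉ m₀ := fun h => hvm (hm₀sub h)
  have hxu : x ≠ u := fun h => hum₀ (h ▸ hxm₀)
  have hxv : x ≠ v := fun h => hvm₀ (h ▸ hxm₀)
  have hm₀cov : ∀ w : V, w ≠ u → w ≠ v → w ∈ m₀ := by
    intro w h1 h2
    have := hmcov w h2
    rw [← hsplitm] at this
    rcases List.mem_append.1 this with h | h
    · exact h
    · simp at h; exact absurd h h1
  set c' := m₀.getLast hm₀ne with hc'def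
  have hm₀l : m₀.getLast? = some c' := List.getLast?_eq_getLast hm₀ne
  have hc'm₀ : c' ∈ m₀ := List.getLast_mem hm₀ne
  have hc'u : c' ≠ u := fun h => hum₀ (h ▸ hc'm₀)
  have hc'v : c' ≠ v := fun h => hvm₀ (h ▸ hc'm₀)
  have hmc' : (m₀ ++ [u]).IsChain E := by rw [hsplitm]; exact hmc
  have hEc'u : E c' u :=
    (List.isChain_append.1 hmc').2.2 c' (by rw [hm₀l]; rfl) u rfl
  -- W2 : a cover tour from c' to u, giving a walk from c' avoiding u that first
  -- reaches v via an in-neighbour b of v, staying inside V \ {u, v}.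
  obtain ⟨q, hq⟩ := CoverProof.coverTour_exists E h3 hconn hout heq (Ne.symm hc'u)
  obtain ⟨q₀, hqeq, hq₀ne, hq₀c, hq₀h, huq₀, hq₀cov⟩ :=
    CoverProof.coverTour_decomp E (by omega) hq
  have hvq₀ : v ∈ q₀ := hq₀cov v hvu
  obtain ⟨r₁, r₂, hq₀split, hvr₁⟩ := CoverProof.split_first hvq₀
  have hr₁ne : r₁ ≠ [] := by
    intro h
    rw [h] at hq₀split
    simp at hq₀split
    rw [hq₀split] at hq₀h
    simp at hq₀h
    exact hc'v hq₀h.symm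
  have hr₁pre : r₁ <+: q₀ := ⟨v :: r₂, hq₀split.symm⟩
  have hr₁c : r₁.IsChain E := hq₀c.prefix hr₁pre
  have hr₁h : r₁.head? = some c' := by
    rw [← hq₀h, hq₀split, List.head?_append_of_ne_nil _ hr₁ne]
  set b := r₁.getLast hr₁ne with hbdef
  have hr₁l : r₁.getLast? = some b := List.getLast?_eq_getLast hr₁ne
  have hq₀c' : (r₁ ++ v :: r₂).IsChain E := by rw [← hq₀split]; exact hq₀c
  have hEbv : E b v :=
    (List.isChain_append.1 hq₀c').2.2 b (by rw [hr₁l]; rfl) v rfl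
  have hr₁sub : ∀ {z : V}, z ∈ r₁ → z ∈ q₀ := fun hz => hr₁pre.subset hz
  have hur₁ : u ∉ r₁ := fun h => huq₀ (hr₁sub h)
  -- W1 : a cover tour from u to v; extract the segment from the last exit of u to the
  -- first visit of x, avoiding u and v.
  obtain ⟨l, hl⟩ := CoverProof.coverTour_exists E h3 hconn hout heq hvu
  obtain ⟨l₀, hleq, hl₀ne, hl₀c, hl₀h, hvl₀, hl₀cov⟩ :=
    CoverProof.coverTour_decomp E (by omega) hl
  have hxl₀ : x ∈ l₀ := hl₀cov x hxv
  obtain ⟨s₁, s₂, hl₀split, hxs₁⟩ := CoverProof.split_first hxl₀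
  set P := s₁ ++ [x] with hPdef
  have hPpre : P <+: l₀ := ⟨s₂, by rw [hPdef, hl₀split]; simp⟩
  have hPc : P.IsChain E := hl₀c.prefix hPpre
  have hs₁ne : s₁ ≠ [] := by
    intro h
    rw [h] at hl₀split
    simp at hl₀split
    rw [hl₀split] at hl₀h
    simp at hl₀h
    exact hxu hl₀h
  have hPh : P.head? = some u := by
    rw [hPdef, List.head?_append_of_ne_nil _ hs₁ne, ← List.head?_append_of_ne_nil
      (l₂ := x :: s₂) _ hs₁ne, ← hl₀split, hl₀h]
  have hPl : P.getLast? = some x := by rw [hPdef]; simp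
  have huP : u ∈ P := List.mem_of_mem_head? (show u ∈ P.head? by rw [hPh]; rfl)
  obtain ⟨p₂, q₂, hPsplit, huq₂⟩ := CoverProof.split_last huP
  have hq₂ne : q₂ ≠ [] := by
    intro h
    rw [h] at hPsplit
    rw [hPsplit] at hPl
    simp at hPl
    exact hxu hPl.symm
  have huq₂c : (u :: q₂).IsChain E := by
    have : (u :: q₂) <:+ P := ⟨p₂, hPsplit.symm⟩
    exact hPc.suffix this
  set y := q₂.head hq₂ne with hydef
  have hq₂h : q₂.head? = some y := List.head?_eq_head hq₂ne
  have hEuy : E u y := (List.isChain_cons.1 huq₂c).1 y hq₂h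
  have hq₂c : q₂.IsChain E := (List.isChain_cons.1 huq₂c).2
  have hq₂sub : ∀ {z : V}, z ∈ q₂ → z ∈ P := by
    intro z hz
    rw [hPsplit]
    exact List.mem_append_right _ (List.mem_cons_of_mem _ hz)
  have hPsub : ∀ {z : V}, z ∈ P → z ∈ l₀ := fun hz => hPpre.subset hz
  have hvq₂ : v ∉ q₂ := fun h => hvl₀ (hPsub (hq₂sub h))
  have hq₂l : q₂.getLast? = some x := by
    rw [← hPl, hPsplit, List.getLast?_append_of_ne_nil _ (by simp),
      CoverProof.getLast?_cons_of_ne_nil u hq₂ne]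
  -- Assemble: M := (q₂ ⋈ m₀ ⋈ r₁) ++ [v] is a member of Tail2 E u v.
  obtain ⟨hAne, hAc, hAh, hAl, hAmem⟩ :=
    CoverProof.join_spec E hq₂ne hm₀ne (by rw [hq₂l, hm₀h]) hq₂c hm₀c
  set A := q₂ ++ m₀.tail with hAdef
  obtain ⟨hBne, hBc, hBh, hBl, hBmem⟩ :=
    CoverProof.join_spec E hAne hr₁ne (by rw [hAl, hm₀l, hr₁h]) hAc hr₁c
  set B := A ++ r₁.tail with hBdef
  have hBlast : B.getLast? = some b := by rw [hBl, hr₁l]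
  have hMc : (B ++ [v]).IsChain E := by
    rw [List.isChain_append]
    refine ⟨hBc, by simp, ?_⟩
    intro z hz y' hy'
    rw [hBlast] at hz
    simp at hz hy'
    rw [← hz, ← hy']
    exact hEbv
  have huB : u ∉ B := by
    intro h
    rcases (hBmem u).1 h with h' | h'
    · rcases (hAmem u).1 h' with h'' | h''
      · exact huq₂ h''
      · exact hum₀ h''
    · exact hur₁ (by exact h')
  have hvB : v ∉ B := by
    intro h
    rcases (hBmem v).1 h with h' | h'
    · rcases (hAmem v).1 h' with h'' | h''
      · exact hvq₂ h''
      · exact hvm₀ h''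
    · exact hvr₁ h'
  have hMmem : (B ++ [v]) ∈ CoverProof.Tail2 E u v := by
    refine ⟨by simp, hMc, ?_, ?_, ?_, ?_, ?_⟩
    · intro z hz
      rw [List.head?_append_of_ne_nil _ hBne, hBh, hAh, hq₂h] at hz
      simp at hz
      rw [← hz]
      exact hEuy
    · intro h
      rcases List.mem_append.1 h with h' | h'
      · exact huB h'
      · simp at h'; exact hvu h'.symm
    · intro w hwu
      by_cases hwv : w = v
      · rw [hwv]; exact List.mem_append_right _ (by simp)
      · apply List.mem_append_left
        apply (hBmem w).2
        left
        exact (hAmem w).2 (Or.inr (hm₀cov w hwu hwv))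
    · simp
    · rw [List.dropLast_concat]
      exact hvB
  rw [hT2empty] at hMmem
  exact hMmem
end

section
/- For the complete graph K_n (n ≥ 3) with all edges bidirected and any vertex u, a random cover tour starting at u is equally likely to end at each of the other n−1 vertices; that is, P(L(u,v)) = 1/(n−1) for every vertex v ≠ u. -/
open scoped ENNReal BigOperators

namespace CoverAux

attribute [local instance 0] Classical.propDecidable

open Finset List

variable {V : Type*} [Fintype V] [DecidableEq V]

/-- IsWalk iff nonempty chain. -/
lemma isWalk_iff (E : V → V → Prop) (l : List V) :
    IsWalk E l ↔ l ≠ [] ∧ l.Chain' E := by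
  induction l with
  | nil => simp [IsWalk]
  | cons a t ih =>
    cases t with
    | nil => simp [IsWalk, List.Chain', List.isChain_singleton]
    | cons b t' =>
      simp only [IsWalk, ih, List.Chain', List.isChain_cons_cons]
      tauto

section Kn

local notation "Ed" => (fun x y : V => x ≠ y)

lemma card_outNbrs (a : V) : (outNbrs Ed a).card = Fintype.card V - 1 := by
  rw [outNbrs, Finset.filter_ne, Finset.card_erase_of_mem (Finset.mem_univ a), Finset.card_univ]

/-- weight depends only on length for `Kₙ`. -/
lemma walkWt_eq (l : List V) :
    walkWt Ed l = ((Fintype.card V - 1 : ℕ) : ℝ≥0∞)⁻¹ ^ (l.length - 1) := by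
  induction l with
  | nil => simp [walkWt]
  | cons a t ih =>
    cases t with
    | nil => simp [walkWt]
    | cons b t' =>
      rw [walkWt, ih, card_outNbrs]
      simp [pow_succ]
      ring


def WF : ℕ → V → Finset (List V)
  | 0, u => {[u]}
  | k+1, u => (Finset.univ.erase u).biUnion (fun w => ((WF k w).image (u :: ·)))

lemma mem_WF : ∀ (k : ℕ) (u : V) (l : List V),
    l ∈ WF k u ↔ l.length = k + 1 ∧ l.Chain' Ed ∧ l.head? = some u := by
  intro k
  induction k with
  | zero =>
    intro u l
    simp only [WF, Finset.mem_singleton]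
    constructor
    · rintro rfl; simp [List.Chain', List.isChain_singleton]
    · rintro ⟨hl, -, hh⟩
      cases l with
      | nil => simp at hh
      | cons a t =>
        simp at hh hl
        subst hh
        rw [hl]
  | succ k ih =>
    intro u l
    simp only [WF, Finset.mem_biUnion, Finset.mem_image, Finset.mem_erase, Finset.mem_univ,
      and_true, ih]
    constructor
    · rintro ⟨w, hwu, l', ⟨hlen, hch, hh⟩, rfl⟩
      refine ⟨by simp [hlen], ?_, by simp⟩
      unfold List.Chain'; rw [List.isChain_cons]
      exact ⟨fun y hy => by rw [hh] at hy; cases hy; exact (Ne.symm hwu), hch⟩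
    · rintro ⟨hlen, hch, hh⟩
      cases l with
      | nil => simp at hh
      | cons a l' =>
        simp at hh; subst hh
        cases l' with
        | nil => simp at hlen
        | cons b t =>
          unfold List.Chain' at hch; rw [List.isChain_cons_cons] at hch
          exact ⟨b, Ne.symm hch.1, b :: t, ⟨by simpa using hlen, hch.2, rfl⟩, rfl⟩

lemma card_WF : ∀ (k : ℕ) (u : V), (WF k u).card = (Fintype.card V - 1) ^ k := by
  intro k
  induction k with
  | zero => intro u; simp [WF]
  | succ k ih =>
    intro u
    rw [WF, Finset.card_biUnion]
    · rw [Finset.sum_congr rfl (fun w _ => ?_)]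
      · rw [Finset.sum_const, Finset.card_erase_of_mem (Finset.mem_univ u), Finset.card_univ,
          smul_eq_mul, pow_succ, mul_comm]
      · rw [Finset.card_image_of_injective _ (fun a b h => by simpa using h), ih]
    · intro w1 h1 w2 h2 hne
      simp only [Finset.disjoint_left, Finset.mem_image]
      rintro l ⟨l1, hl1, rfl⟩ ⟨l2, hl2, he⟩
      simp only [List.cons.injEq] at he
      rw [mem_WF] at hl1 hl2
      apply hne
      have := hl1.2.2
      rw [← he.2] at this
      rw [hl2.2.2] at this
      exact (Option.some_injective _ this).symm


lemma WF_image_disjoint (k : ℕ) (a : V) {w1 w2 : V} (hne : w1 ≠ w2)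
    {s1 s2 : Finset (List V)} (h1 : s1 ⊆ WF k w1) (h2 : s2 ⊆ WF k w2) :
    Disjoint (s1.image (a :: ·)) (s2.image (a :: ·)) := by
  simp only [Finset.disjoint_left, Finset.mem_image]
  rintro l ⟨l1, hl1, rfl⟩ ⟨l2, hl2, he⟩
  simp only [List.cons.injEq, true_and] at he
  have e1 := ((mem_WF k w1 l1).mp (h1 hl1)).2.2
  have e2 := ((mem_WF k w2 l2).mp (h2 hl2)).2.2
  rw [he, e1] at e2
  exact hne (Option.some_injective _ e2)

lemma card_WF_avoid (v : V) : ∀ (k : ℕ) (u : V), v ≠ u →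
    ((WF k u).filter (fun l => v ∉ l)).card = (Fintype.card V - 2) ^ k := by
  intro k
  induction k with
  | zero =>
    intro u hvu
    simp [WF, Finset.filter_singleton, hvu]
  | succ k ih =>
    intro u hvu
    have hset : (WF (k+1) u).filter (fun l => v ∉ l)
        = ((Finset.univ.erase u).erase v).biUnion
            (fun w => ((WF k w).filter (fun l => v ∉ l)).image (u :: ·)) := by
      ext l
      simp only [WF, Finset.mem_filter, Finset.mem_biUnion, Finset.mem_image, Finset.mem_erase,
        Finset.mem_univ, and_true]
      constructor
      · rintro ⟨⟨w, hw, l', hl', rfl⟩, hv⟩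
        have hvl' : v ∉ l' := fun h => hv (List.mem_cons_of_mem _ h)
        have hwv : w ≠ v := by
          intro h
          subst h
          exact hvl' (List.mem_of_mem_head? ((mem_WF k w l').mp hl').2.2)
        exact ⟨w, ⟨hwv, hw⟩, l', ⟨hl', hvl'⟩, rfl⟩
      · rintro ⟨w, ⟨hwv, hwu⟩, l', hl', rfl⟩
        refine ⟨⟨w, hwu, l', hl'.1, rfl⟩, ?_⟩
        simp only [List.mem_cons, not_or]
        exact ⟨hvu, hl'.2⟩
    rw [hset, Finset.card_biUnion]
    · have : ∀ w ∈ (Finset.univ.erase u).erase v,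
          (((WF k w).filter (fun l => v ∉ l)).image (u :: ·)).card = (Fintype.card V - 2) ^ k := by
        intro w hw
        rw [Finset.mem_erase] at hw
        rw [Finset.card_image_of_injective _ (fun a b h => by simpa using h),
          ih w (Ne.symm hw.1)]
      rw [Finset.sum_congr rfl this, Finset.sum_const,
        Finset.card_erase_of_mem (by simp [hvu]),
        Finset.card_erase_of_mem (Finset.mem_univ u), Finset.card_univ, smul_eq_mul,
        pow_succ, mul_comm]
      have h2 : Fintype.card V - 1 - 1 = Fintype.card V - 2 := by omega
      rw [h2]
    · intro w1 h1 w2 h2 hne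
      exact WF_image_disjoint k u hne (Finset.filter_subset _ _) (Finset.filter_subset _ _)

lemma card_WF_prefix : ∀ (t : List V) (k : ℕ) (u : V), t.Chain' Ed → t.head? = some u →
    t.length - 1 ≤ k →
    ((WF k u).filter (fun l => t <+: l)).card = (Fintype.card V - 1) ^ (k - (t.length - 1)) := by
  intro t
  induction t with
  | nil => intro k u _ hh _; simp at hh
  | cons a t' ih =>
    intro k u hch hh hlen
    simp only [List.head?_cons, Option.some.injEq] at hh
    subst hh
    cases t' with
    | nil =>
      have : (WF k a).filter (fun l => [a] <+: l) = WF k a := by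
        apply Finset.filter_eq_self.mpr
        intro l hl
        have := ((mem_WF k a l).mp hl).2.2
        cases l with
        | nil => simp at this
        | cons x xs =>
          simp only [List.head?_cons, Option.some.injEq] at this
          subst this
          simp [List.cons_prefix_cons]
      rw [this, card_WF]
      simp
    | cons b t'' =>
      cases k with
      | zero => simp at hlen
      | succ k =>
        have hab : a ≠ b := (List.isChain_cons_cons.mp hch).1
        have hset : (WF (k+1) a).filter (fun l => (a :: b :: t'') <+: l)
            = ((WF k b).filter (fun l => (b :: t'') <+: l)).image (a :: ·) := by
          ext l
          simp only [Finset.mem_filter, Finset.mem_image, WF, Finset.mem_biUnion,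
            Finset.mem_erase, Finset.mem_univ, and_true]
          constructor
          · rintro ⟨⟨w, hw, l', hl', rfl⟩, hpre⟩
            rw [List.cons_prefix_cons] at hpre
            have hwb : w = b := by
              have e := ((mem_WF k w l').mp hl').2.2
              obtain ⟨s, hs⟩ := hpre.2
              rw [← hs] at e
              simp only [List.cons_append, List.head?_cons, Option.some.injEq] at e
              exact e.symm
            subst hwb
            exact ⟨l', ⟨hl', hpre.2⟩, rfl⟩
          · rintro ⟨l', hl', rfl⟩
            refine ⟨⟨b, Ne.symm hab, l', hl'.1, rfl⟩, ?_⟩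
            rw [List.cons_prefix_cons]
            exact ⟨rfl, hl'.2⟩
        rw [hset, Finset.card_image_of_injective _ (fun x y h => by simpa using h)]
        have hlen' : (b :: t'').length - 1 ≤ k := by
          simp only [List.length_cons] at hlen ⊢
          omega
        rw [ih k b (List.isChain_cons_cons.mp hch).2 rfl hlen']
        congr 1
        simp only [List.length_cons]
        omega


def Covers (l : List V) : Prop := ∀ x : V, x ∈ l

instance : DecidablePred (Covers (V := V)) := fun _ => Fintype.decidableForallFintype

def CT (u : V) (l : List V) : Prop :=
  l.Chain' (fun x y : V => x ≠ y) ∧ l.head? = some u ∧ Covers l ∧ ¬ Covers l.dropLast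

noncomputable instance (u : V) : DecidablePred (CT u) := fun l => by unfold CT; infer_instance

noncomputable def CTF (u : V) (k : ℕ) : Finset (List V) :=
  (Finset.range (k+1)).biUnion (fun j => (WF j u).filter (CT u))

lemma mem_CTF {u : V} {k : ℕ} {t : List V} :
    t ∈ CTF u k ↔ CT u t ∧ t.length - 1 ≤ k := by
  simp only [CTF, Finset.mem_biUnion, Finset.mem_range, Finset.mem_filter, mem_WF]
  constructor
  · rintro ⟨j, hj, ⟨hlen, hch, hh⟩, hct⟩
    exact ⟨hct, by omega⟩
  · rintro ⟨hct, hlen⟩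
    have hne : t ≠ [] := by
      intro h
      rw [h] at hct
      simpa using hct.2.1
    have hpos : 0 < t.length := List.length_pos_iff.mpr hne
    exact ⟨t.length - 1, by omega, ⟨by omega, hct.1, hct.2.1⟩, hct⟩

lemma sum_walkWt {k : ℕ} {u : V} {s : Finset (List V)} (hs : s ⊆ WF k u) :
    ∑ l ∈ s, walkWt Ed l = (s.card : ℝ≥0∞) * ((Fintype.card V - 1 : ℕ) : ℝ≥0∞)⁻¹ ^ k := by
  rw [Finset.sum_congr rfl (fun l hl => ?_), Finset.sum_const, nsmul_eq_mul]
  rw [walkWt_eq, ((mem_WF k u l).mp (hs hl)).1]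
  simp

lemma CT_prefix_eq {u : V} {t1 t2 : List V} (h1 : CT u t1) (h2 : CT u t2)
    (hp : t1 <+: t2) : t1 = t2 := by
  by_contra hne
  have hlt : t1.length < t2.length :=
    lt_of_le_of_ne hp.length_le (fun h => hne (List.IsPrefix.eq_of_length hp h))
  have hp' : t1 <+: t2.dropLast := by
    rw [List.prefix_iff_eq_take] at hp ⊢
    rw [List.dropLast_eq_take, List.take_take, min_eq_left (by omega)]
    exact hp
  exact h2.2.2.2 (fun x => hp'.subset (h1.2.2.1 x))

lemma exists_cover_prefix {u : V} {k : ℕ} {l : List V} (hl : l ∈ WF k u) (hc : Covers l) :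
    ∃ t, t ∈ CTF u k ∧ t <+: l := by
  obtain ⟨hlen, hch, hh⟩ := (mem_WF k u l).mp hl
  have hex : ∃ i, Covers (l.take i) := ⟨l.length, by rw [List.take_length]; exact hc⟩
  set i0 := Nat.find hex with hi0
  have hcov : Covers (l.take i0) := Nat.find_spec hex
  have hpos : 0 < i0 := by
    rcases Nat.eq_zero_or_pos i0 with h | h
    · exfalso
      rw [h] at hcov
      simpa using hcov u
    · exact h
  have hle : i0 ≤ l.length := Nat.find_le (by rw [List.take_length]; exact hc)
  refine ⟨l.take i0, ?_, List.take_prefix _ _⟩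
  rw [mem_CTF]
  have hlent : (l.take i0).length = i0 := by rw [List.length_take]; omega
  refine ⟨⟨hch.prefix (List.take_prefix _ _), ?_, hcov, ?_⟩, by omega⟩
  · have hhd : (l.take i0).head? = l.head? := by
      cases l with
      | nil => simp
      | cons a r =>
        obtain ⟨m, hm⟩ : ∃ m, i0 = m + 1 := ⟨i0 - 1, by omega⟩
        rw [hm]
        simp
    rw [hhd, hh]
  · have hdl : (l.take i0).dropLast = l.take (i0 - 1) := by
      rw [List.dropLast_eq_take, hlent, List.take_take, min_eq_left (by omega)]
    rw [hdl]
    exact Nat.find_min hex (by omega)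

lemma pow_mul_inv_pow (hcard : 3 ≤ Fintype.card V) {j k : ℕ} (hjk : j ≤ k) :
    (((Fintype.card V - 1) ^ (k - j) : ℕ) : ℝ≥0∞) * ((Fintype.card V - 1 : ℕ) : ℝ≥0∞)⁻¹ ^ k
      = ((Fintype.card V - 1 : ℕ) : ℝ≥0∞)⁻¹ ^ j := by
  set m : ℝ≥0∞ := ((Fintype.card V - 1 : ℕ) : ℝ≥0∞) with hm
  have hm0 : m ≠ 0 := by
    rw [hm]
    simp only [ne_eq, Nat.cast_eq_zero]
    omega
  have hmt : m ≠ ⊤ := ENNReal.natCast_ne_top _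
  rw [Nat.cast_pow]
  calc m ^ (k - j) * m⁻¹ ^ k = m ^ (k - j) * (m⁻¹ ^ (k - j) * m⁻¹ ^ j) := by
        rw [← pow_add]
        congr 2
        omega
    _ = (m * m⁻¹) ^ (k - j) * m⁻¹ ^ j := by rw [mul_pow, mul_assoc]
    _ = m⁻¹ ^ j := by rw [ENNReal.mul_inv_cancel hm0 hmt, one_pow, one_mul]

lemma sum_WF_eq_one (hcard : 3 ≤ Fintype.card V) (u : V) (k : ℕ) :
    ∑ l ∈ WF k u, walkWt Ed l = 1 := by
  rw [sum_walkWt (subset_refl _), card_WF, Nat.cast_pow, ← mul_pow,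
    ENNReal.mul_inv_cancel (by simp only [ne_eq, Nat.cast_eq_zero]; omega)
      (ENNReal.natCast_ne_top _), one_pow]

lemma sum_CTF (hcard : 3 ≤ Fintype.card V) (u : V) (k : ℕ) :
    ∑ t ∈ CTF u k, walkWt Ed t
      = ∑ l ∈ (WF k u).filter (fun l => Covers l), walkWt Ed l := by
  have hU : (WF k u).filter (fun l => Covers l)
      = (CTF u k).biUnion (fun t => (WF k u).filter (fun l => t <+: l)) := by
    ext l
    simp only [Finset.mem_filter, Finset.mem_biUnion]
    constructor
    · rintro ⟨hl, hc⟩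
      obtain ⟨t, ht, hp⟩ := exists_cover_prefix hl hc
      exact ⟨t, ht, hl, hp⟩
    · rintro ⟨t, ht, hl, hp⟩
      exact ⟨hl, fun x => hp.subset ((mem_CTF.mp ht).1.2.2.1 x)⟩
  have hdisj : ∀ t1 ∈ CTF u k, ∀ t2 ∈ CTF u k, t1 ≠ t2 →
      Disjoint ((WF k u).filter (fun l => t1 <+: l)) ((WF k u).filter (fun l => t2 <+: l)) := by
    intro t1 h1 t2 h2 hne
    rw [Finset.disjoint_left]
    intro l hl1 hl2
    rw [Finset.mem_filter] at hl1 hl2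
    rcases List.prefix_or_prefix_of_prefix hl1.2 hl2.2 with h | h
    · exact hne (CT_prefix_eq (mem_CTF.mp h1).1 (mem_CTF.mp h2).1 h)
    · exact hne (CT_prefix_eq (mem_CTF.mp h2).1 (mem_CTF.mp h1).1 h).symm
  rw [hU, Finset.sum_biUnion hdisj]
  apply Finset.sum_congr rfl
  intro t ht
  obtain ⟨hct, hlen⟩ := mem_CTF.mp ht
  rw [sum_walkWt (Finset.filter_subset _ _), card_WF_prefix t k u hct.1 hct.2.1 hlen,
    pow_mul_inv_pow hcard hlen, walkWt_eq]

lemma NC_le (hcard : 3 ≤ Fintype.card V) (u : V) (k : ℕ) :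
    ∑ l ∈ (WF k u).filter (fun l => ¬ Covers l), walkWt Ed l
      ≤ (Fintype.card V : ℝ≥0∞) *
        (((Fintype.card V - 2 : ℕ) : ℝ≥0∞) * ((Fintype.card V - 1 : ℕ) : ℝ≥0∞)⁻¹) ^ k := by
  rw [sum_walkWt (Finset.filter_subset _ _)]
  have hcard_le : ((WF k u).filter (fun l => ¬ Covers l)).card
      ≤ Fintype.card V * (Fintype.card V - 2) ^ k := by
    have hsub : (WF k u).filter (fun l => ¬ Covers l)
        ⊆ Finset.univ.biUnion (fun v => (WF k u).filter (fun l => v ∉ l)) := by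
      intro l hl
      rw [Finset.mem_filter] at hl
      obtain ⟨x, hx⟩ := not_forall.mp hl.2
      rw [Finset.mem_biUnion]
      exact ⟨x, Finset.mem_univ x, Finset.mem_filter.mpr ⟨hl.1, hx⟩⟩
    calc ((WF k u).filter (fun l => ¬ Covers l)).card
        ≤ (Finset.univ.biUnion (fun v => (WF k u).filter (fun l => v ∉ l))).card :=
          Finset.card_le_card hsub
      _ ≤ ∑ v : V, ((WF k u).filter (fun l => v ∉ l)).card := Finset.card_biUnion_le
      _ ≤ ∑ _v : V, (Fintype.card V - 2) ^ k := by
          apply Finset.sum_le_sum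
          intro w _
          rcases eq_or_ne w u with rfl | hwu
          · have : (WF k w).filter (fun l => w ∉ l) = ∅ := by
              apply Finset.filter_eq_empty_iff.mpr
              intro l hl
              simp only [not_not]
              exact List.mem_of_mem_head? ((mem_WF k w l).mp hl).2.2
            simp [this]
          · rw [card_WF_avoid w k u hwu]
      _ = Fintype.card V * (Fintype.card V - 2) ^ k := by
          rw [Finset.sum_const, Finset.card_univ, smul_eq_mul]
  calc (((WF k u).filter (fun l => ¬ Covers l)).card : ℝ≥0∞)
        * ((Fintype.card V - 1 : ℕ) : ℝ≥0∞)⁻¹ ^ k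
      ≤ ((Fintype.card V * (Fintype.card V - 2) ^ k : ℕ) : ℝ≥0∞)
        * ((Fintype.card V - 1 : ℕ) : ℝ≥0∞)⁻¹ ^ k := by
        apply mul_le_mul_left
        exact_mod_cast Nat.cast_le.mpr hcard_le
    _ = (Fintype.card V : ℝ≥0∞) *
        (((Fintype.card V - 2 : ℕ) : ℝ≥0∞) * ((Fintype.card V - 1 : ℕ) : ℝ≥0∞)⁻¹) ^ k := by
        rw [Nat.cast_mul, Nat.cast_pow, mul_pow, mul_assoc]


noncomputable def TotalCover (u : V) : ℝ≥0∞ :=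
  ∑' l : List V, if CT u l then walkWt Ed l else 0

lemma totalCover_eq_iSup (u : V) :
    TotalCover u = ⨆ k, ∑ t ∈ CTF u k, walkWt Ed t := by
  apply _root_.le_antisymm
  · rw [TotalCover, ENNReal.tsum_eq_iSup_sum]
    apply iSup_le
    intro s
    refine le_trans ?_ (le_iSup _ (s.sup List.length))
    rw [← Finset.sum_filter]
    apply Finset.sum_le_sum_of_subset
    intro t ht
    rw [Finset.mem_filter] at ht
    rw [mem_CTF]
    have := Finset.le_sup (f := List.length) ht.1
    exact ⟨ht.2, by omega⟩
  · apply iSup_le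
    intro k
    calc ∑ t ∈ CTF u k, walkWt Ed t
        = ∑ t ∈ CTF u k, (if CT u t then walkWt Ed t else 0) := by
          apply Finset.sum_congr rfl
          intro t ht
          rw [if_pos (mem_CTF.mp ht).1]
      _ ≤ TotalCover u := ENNReal.sum_le_tsum _

lemma totalCover_eq_one (hcard : 3 ≤ Fintype.card V) (u : V) : TotalCover u = 1 := by
  rw [totalCover_eq_iSup]
  set S : ℕ → ℝ≥0∞ := fun k => ∑ t ∈ CTF u k, walkWt Ed t with hS
  set NC : ℕ → ℝ≥0∞ :=
    fun k => ∑ l ∈ (WF k u).filter (fun l => ¬ Covers l), walkWt Ed l with hNC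
  have hsplit : ∀ k, S k + NC k = 1 := by
    intro k
    rw [hS, hNC]
    simp only
    rw [sum_CTF hcard, Finset.sum_filter_add_sum_filter_not, sum_WF_eq_one hcard]
  have hNC0 : Filter.Tendsto NC Filter.atTop (nhds 0) := by
    have hr : ((Fintype.card V - 2 : ℕ) : ℝ≥0∞) * ((Fintype.card V - 1 : ℕ) : ℝ≥0∞)⁻¹ < 1 := by
      have hb0 : ((Fintype.card V - 1 : ℕ) : ℝ≥0∞) ≠ 0 := by
        simp only [ne_eq, Nat.cast_eq_zero]
        omega
      rw [← div_eq_mul_inv,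
        ENNReal.div_lt_iff (Or.inl hb0) (Or.inl (ENNReal.natCast_ne_top _)), one_mul]
      exact_mod_cast (by omega : Fintype.card V - 2 < Fintype.card V - 1)
    have hb : Filter.Tendsto
        (fun k => (Fintype.card V : ℝ≥0∞) *
          (((Fintype.card V - 2 : ℕ) : ℝ≥0∞) * ((Fintype.card V - 1 : ℕ) : ℝ≥0∞)⁻¹) ^ k)
        Filter.atTop (nhds 0) := by
      have h0 := ENNReal.tendsto_pow_atTop_nhds_zero_of_lt_one hr
      have := ENNReal.Tendsto.const_mul (a := (Fintype.card V : ℝ≥0∞)) h0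
        (Or.inr (ENNReal.natCast_ne_top _))
      simpa using this
    exact tendsto_of_tendsto_of_tendsto_of_le_of_le tendsto_const_nhds hb
      (fun k => zero_le) (fun k => NC_le hcard u k)
  apply _root_.le_antisymm
  · apply iSup_le
    intro k
    rw [← hsplit k]
    exact le_self_add
  · have ht : Filter.Tendsto (fun k => (⨆ k, S k) + NC k) Filter.atTop (nhds ((⨆ k, S k) + 0)) :=
      Filter.Tendsto.const_add _ hNC0
    have hone : ∀ k, (1 : ℝ≥0∞) ≤ (⨆ k, S k) + NC k := by
      intro k
      rw [← hsplit k]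
      exact add_le_add_left (le_iSup S k) _
    have := ge_of_tendsto ht (Filter.Eventually.of_forall hone)
    simpa using this


lemma coverProb_eq (u v : V) :
    coverProb Ed u v = ∑' l : List V, if IsCoverTour Ed u v l then walkWt Ed l else 0 := by
  classical
  rw [coverProb]
  have h := tsum_subtype {l : List V | IsCoverTour Ed u v l} (fun l => walkWt Ed l)
  refine h.trans (tsum_congr fun l => ?_)
  by_cases hl : IsCoverTour Ed u v l
  · rw [Set.indicator_of_mem (Set.mem_setOf.mpr hl), if_pos hl]
  · rw [Set.indicator_of_notMem (fun hmem => hl (Set.mem_setOf.mp hmem)), if_neg hl]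

lemma isCoverTour_iff {u v : V} {l : List V} :
    IsCoverTour Ed u v l ↔ CT u l ∧ l.getLast? = some v := by
  rw [IsCoverTour, isWalk_iff, CT]
  constructor
  · rintro ⟨⟨hne, hch⟩, hh, hlast, hcov, hvd⟩
    exact ⟨⟨hch, hh, hcov, fun hcd => hvd (hcd v)⟩, hlast⟩
  · rintro ⟨⟨hch, hh, hcov, hncd⟩, hlast⟩
    have hne : l ≠ [] := by
      intro h
      rw [h] at hh
      simp at hh
    refine ⟨⟨hne, hch⟩, hh, hlast, hcov, ?_⟩
    intro hvd
    apply hncd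
    intro x
    have hx := hcov x
    have hdecomp : l.dropLast ++ [v] = l := List.dropLast_append_getLast? v hlast
    rw [← hdecomp] at hx
    rcases List.mem_append.mp hx with h | h
    · exact h
    · rw [List.mem_singleton] at h
      rw [h]
      exact hvd

lemma sum_ite_endpoint (u : V) (l : List V) :
    ∑ v ∈ Finset.univ, (if IsCoverTour Ed u v l then walkWt Ed l else 0)
      = if CT u l then walkWt Ed l else 0 := by
  classical
  by_cases hct : CT u l
  · have hne : l ≠ [] := by
      intro h
      have := hct.2.1
      rw [h] at this
      simp at this
    obtain ⟨v0, hv0⟩ : ∃ v0, l.getLast? = some v0 :=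
      ⟨l.getLast hne, List.getLast?_eq_getLast hne⟩
    rw [if_pos hct]
    have hcong : ∀ v ∈ Finset.univ,
        (if IsCoverTour Ed u v l then walkWt Ed l else 0)
          = (if v = v0 then walkWt Ed l else 0) := by
      intro v _
      have hiff : IsCoverTour Ed u v l ↔ v = v0 := by
        rw [isCoverTour_iff]
        simp [hct, hv0, eq_comm]
      exact if_congr hiff rfl rfl
    rw [Finset.sum_congr rfl hcong, Finset.sum_ite_eq' Finset.univ v0 (fun _ => walkWt Ed l),
      if_pos (Finset.mem_univ v0)]
  · rw [if_neg hct]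
    apply Finset.sum_eq_zero
    intro v _
    exact if_neg (fun h => hct (isCoverTour_iff.mp h).1)

lemma sum_coverProb (u : V) :
    ∑ v ∈ Finset.univ, coverProb Ed u v = TotalCover u := by
  rw [Finset.sum_congr rfl (fun v _ => coverProb_eq u v),
    ← Summable.tsum_finsetSum (fun v _ => ENNReal.summable), TotalCover]
  exact tsum_congr (fun l => sum_ite_endpoint u l)

lemma coverProb_self (hcard : 3 ≤ Fintype.card V) (u : V) : coverProb Ed u u = 0 := by
  classical
  rw [coverProb_eq]
  have hzero : ∀ l : List V, (if IsCoverTour Ed u u l then walkWt Ed l else 0) = 0 := by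
    intro l
    rw [if_neg]
    rintro ⟨hw, hh, hlast, hcov, hnd⟩
    obtain ⟨x, hx⟩ : ∃ x : V, x ≠ u := Fintype.exists_ne_of_one_lt_card (by omega) u
    cases l with
    | nil => simp at hh
    | cons a r =>
      obtain rfl : a = u := by simpa using hh
      cases r with
      | nil =>
        have := hcov x
        simp only [List.mem_singleton] at this
        exact hx this
      | cons b r' =>
        apply hnd
        simp [List.dropLast]
  rw [tsum_congr hzero, tsum_zero]

lemma isCoverTour_map (σ : V ≃ V) (a b : V) (l : List V) :
    IsCoverTour Ed (σ a) (σ b) (l.map σ) ↔ IsCoverTour Ed a b l := by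
  rw [IsCoverTour, IsCoverTour, isWalk_iff, isWalk_iff]
  have h1 : l.map σ ≠ [] ↔ l ≠ [] := by simp
  have h2 : (l.map σ).Chain' Ed ↔ l.Chain' Ed := by
    unfold List.Chain'; rw [List.isChain_map]
    constructor
    · exact fun h => h.imp (fun x y hxy he => hxy (congrArg σ he))
    · exact fun h => h.imp (fun x y hxy he => hxy (σ.injective he))
  have h3 : (l.map σ).head? = some (σ a) ↔ l.head? = some a := by
    rw [List.head?_map]
    cases l.head? with
    | none => simp
    | some c => simp [σ.injective.eq_iff]
  have h4 : (l.map σ).getLast? = some (σ b) ↔ l.getLast? = some b := by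
    rw [List.getLast?_map]
    cases l.getLast? with
    | none => simp
    | some c => simp [σ.injective.eq_iff]
  have h5 : (∀ x : V, x ∈ l.map σ) ↔ ∀ x : V, x ∈ l := by
    constructor
    · intro h x
      obtain ⟨y, hy, he⟩ := List.mem_map.mp (h (σ x))
      rwa [σ.injective he] at hy
    · intro h x
      obtain ⟨y, rfl⟩ := σ.surjective x
      exact List.mem_map_of_mem (h y)
  have h6 : σ b ∈ (l.map σ).dropLast ↔ b ∈ l.dropLast := by
    rw [← List.map_dropLast]
    exact List.mem_map_of_injective σ.injective
  exact and_congr (and_congr h1 h2)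
    (and_congr h3 (and_congr h4 (and_congr h5 (not_congr h6))))

lemma coverProb_swap (u v w : V) (hv : v ≠ u) (hw : w ≠ u) :
    coverProb Ed u v = coverProb Ed u w := by
  classical
  rcases eq_or_ne v w with rfl | hvw
  · rfl
  rw [coverProb_eq, coverProb_eq]
  set σ : V ≃ V := Equiv.swap v w with hσ
  have hσu : σ u = u := Equiv.swap_apply_of_ne_of_ne (Ne.symm hv) (Ne.symm hw)
  have hσw : σ w = v := Equiv.swap_apply_right v w
  set e : List V ≃ List V := Equiv.listEquivOfEquiv σ with he
  have hmap : ∀ l : List V, e l = l.map σ := fun l => rfl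
  calc ∑' l : List V, (if IsCoverTour Ed u v l then walkWt Ed l else 0)
      = ∑' l : List V, (if IsCoverTour Ed u v (e l) then walkWt Ed (e l) else 0) :=
        (e.tsum_eq _).symm
    _ = ∑' l : List V, (if IsCoverTour Ed u w l then walkWt Ed l else 0) := by
        apply tsum_congr
        intro l
        rw [hmap]
        have hiff : IsCoverTour Ed u v (l.map σ) ↔ IsCoverTour Ed u w l := by
          have h := isCoverTour_map σ u w l
          rw [hσu, hσw] at h
          exact h
        have hwt : walkWt Ed (l.map σ) = walkWt Ed l := by
          rw [walkWt_eq, walkWt_eq, List.length_map]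
        rw [hwt]
        exact if_congr hiff rfl rfl

end Kn

end CoverAux

/-- On the bidirected complete graph `Kₙ` (`n ≥ 3`), a random cover tour from `u` is
equally likely to end at each of the other `n - 1` vertices:
`P(L(u,v)) = 1/(n-1)` for all `v ≠ u`. -/
theorem stmt11 {V : Type*} [Fintype V] [DecidableEq V]
    (h3 : 3 ≤ Fintype.card V) (u v : V) (hne : v ≠ u) :
    coverProb (fun x y : V => x ≠ y) u v = ((Fintype.card V - 1 : ℕ) : ℝ≥0∞)⁻¹ := by
  classical
  have key : ∑ w ∈ Finset.univ, coverProb (fun x y : V => x ≠ y) u w = 1 :=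
    (CoverAux.sum_coverProb u).trans (CoverAux.totalCover_eq_one h3 u)
  rw [← Finset.add_sum_erase Finset.univ _ (Finset.mem_univ u),
    CoverAux.coverProb_self h3 u, zero_add] at key
  have hconst : ∀ w ∈ Finset.univ.erase u,
      coverProb (fun x y : V => x ≠ y) u w = coverProb (fun x y : V => x ≠ y) u v :=
    fun w hw => CoverAux.coverProb_swap u w v (Finset.mem_erase.mp hw).1 hne
  rw [Finset.sum_congr rfl hconst, Finset.sum_const,
    Finset.card_erase_of_mem (Finset.mem_univ u), Finset.card_univ, nsmul_eq_mul] at key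
  have hm0 : ((Fintype.card V - 1 : ℕ) : ℝ≥0∞) ≠ 0 := by
    simp only [ne_eq, Nat.cast_eq_zero]
    omega
  have hmt : ((Fintype.card V - 1 : ℕ) : ℝ≥0∞) ≠ ⊤ := ENNReal.natCast_ne_top _
  calc coverProb (fun x y : V => x ≠ y) u v
      = ((Fintype.card V - 1 : ℕ) : ℝ≥0∞)⁻¹ *
        (((Fintype.card V - 1 : ℕ) : ℝ≥0∞) * coverProb (fun x y : V => x ≠ y) u v) := by
        rw [← mul_assoc, ENNReal.inv_mul_cancel hm0 hmt, one_mul]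
    _ = ((Fintype.card V - 1 : ℕ) : ℝ≥0∞)⁻¹ := by rw [key, mul_one]
end
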